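/- arXiv:1607.01458 — 2 statements merged into one kernel-verified Lean document; each statement's English description precedes it below -/
import Mathlib

section
/- For every positive integer d and real numbers 0 < δ ≤ M, there exists a constant c > 0 such that for all symmetric d × d real matrices Σ₁, Σ₂ satisfying δ I ⪯ Σ_i ⪯ M I (i = 1, 2), one has ∫_{ℝ^d} | φ_{Σ₁}(x) − φ_{Σ₂}(x) | dx ≤ c ‖Σ₁ − Σ₂‖, where ‖·‖ is the operator (or Frobenius) norm. Equivalently, the total variation distance between N(0, Σ₁) and N(0, Σ₂) is bounded by (c/2) ‖Σ₁ − Σ₂‖. -/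
open MeasureTheory Matrix

/-- The Lebesgue density of the centered Gaussian `N(0, S)` on `ℝ^d`. -/
noncomputable def gaussianPDF (d : ℕ) (S : Matrix (Fin d) (Fin d) ℝ)
    (x : Fin d → ℝ) : ℝ :=
  (2 * Real.pi) ^ (-(d : ℝ) / 2) * S.det ^ (-(1 : ℝ) / 2) *
    Real.exp (-(1 / 2) * (x ⬝ᵥ (S⁻¹ *ᵥ x)))

/-- The Frobenius norm of a real matrix. -/
noncomputable def frobNorm {d : ℕ} (M : Matrix (Fin d) (Fin d) ℝ) : ℝ :=
  Real.sqrt (∑ i, ∑ j, (M i j) ^ 2)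

namespace GA

variable {d : ℕ} {δ M : ℝ} {S : Matrix (Fin d) (Fin d) ℝ}

/-! ### Basic facts about `sqn` and Cauchy–Schwarz -/

def sqn (x : Fin d → ℝ) : ℝ := x ⬝ᵥ x

lemma sqn_eq (x : Fin d → ℝ) : sqn x = ∑ i, x i ^ 2 := by
  simp [sqn, dotProduct, pow_two]

lemma sqn_nonneg (x : Fin d → ℝ) : 0 ≤ sqn x := by
  simpa [sqn] using dotProduct_self_star_nonneg (R := ℝ) x

lemma dot_abs_le (u v : Fin d → ℝ) :
    |u ⬝ᵥ v| ≤ Real.sqrt (sqn u) * Real.sqrt (sqn v) := by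
  have h := Finset.sum_mul_sq_le_sq_mul_sq Finset.univ u v
  calc |u ⬝ᵥ v| = Real.sqrt ((u ⬝ᵥ v) ^ 2) := (Real.sqrt_sq_eq_abs _).symm
    _ ≤ Real.sqrt ((∑ i, u i ^ 2) * (∑ i, v i ^ 2)) :=
        Real.sqrt_le_sqrt (by simpa [dotProduct] using h)
    _ = Real.sqrt (sqn u) * Real.sqrt (sqn v) := by
        rw [Real.sqrt_mul (by positivity), sqn_eq, sqn_eq]

lemma quad_abs_le (A : Matrix (Fin d) (Fin d) ℝ) (u v : Fin d → ℝ) :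
    |u ⬝ᵥ (A *ᵥ v)| ≤ frobNorm A * (Real.sqrt (sqn u) * Real.sqrt (sqn v)) := by
  have hrw : u ⬝ᵥ (A *ᵥ v) = ∑ p : Fin d × Fin d, A p.1 p.2 * (u p.1 * v p.2) := by
    rw [Fintype.sum_prod_type]
    simp [dotProduct, mulVec, Finset.mul_sum]
    congr 1; funext i; congr 1; funext j; ring
  have h := Finset.sum_mul_sq_le_sq_mul_sq Finset.univ
      (fun p : Fin d × Fin d => A p.1 p.2) (fun p : Fin d × Fin d => u p.1 * v p.2)
  have h2 : (∑ p : Fin d × Fin d, (u p.1 * v p.2) ^ 2) = (∑ i, u i ^ 2) * (∑ j, v j ^ 2) := by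
    rw [Fintype.sum_prod_type, Finset.sum_mul_sum]
    congr 1; funext i; congr 1; funext j; ring
  calc |u ⬝ᵥ (A *ᵥ v)| = Real.sqrt ((∑ p : Fin d × Fin d, A p.1 p.2 * (u p.1 * v p.2)) ^ 2) := by
        rw [hrw, Real.sqrt_sq_eq_abs]
    _ ≤ Real.sqrt ((∑ p : Fin d × Fin d, A p.1 p.2 ^ 2) * ((∑ i, u i ^ 2) * (∑ j, v j ^ 2))) := by
        apply Real.sqrt_le_sqrt; rw [← h2]; exact h
    _ = frobNorm A * (Real.sqrt (sqn u) * Real.sqrt (sqn v)) := by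
        rw [Real.sqrt_mul (by positivity), Real.sqrt_mul (by positivity), sqn_eq, sqn_eq, frobNorm,
          Fintype.sum_prod_type]

lemma entry_le_frob (A : Matrix (Fin d) (Fin d) ℝ) (i j : Fin d) :
    |A i j| ≤ frobNorm A := by
  rw [frobNorm, ← Real.sqrt_sq_eq_abs]
  apply Real.sqrt_le_sqrt
  calc A i j ^ 2 ≤ ∑ j', A i j' ^ 2 :=
        Finset.single_le_sum (f := fun j' => A i j' ^ 2) (fun j' _ => sq_nonneg _)
          (Finset.mem_univ j)
    _ ≤ ∑ i', ∑ j', A i' j' ^ 2 :=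
        Finset.single_le_sum (f := fun i' => ∑ j', A i' j' ^ 2)
          (fun i' _ => Finset.sum_nonneg fun j' _ => sq_nonneg _) (Finset.mem_univ i)

lemma frobNorm_nonneg (A : Matrix (Fin d) (Fin d) ℝ) : 0 ≤ frobNorm A := Real.sqrt_nonneg _

lemma frobNorm_sub_comm (A B : Matrix (Fin d) (Fin d) ℝ) :
    frobNorm (A - B) = frobNorm (B - A) := by
  unfold frobNorm
  congr 1
  refine Finset.sum_congr rfl fun i _ => Finset.sum_congr rfl fun j _ => ?_
  simp only [Matrix.sub_apply]
  ring

/-! ### Quadratic form bounds from the Loewner-type hypotheses -/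

lemma lower_quad (h : (S - δ • 1).PosSemidef) (x : Fin d → ℝ) :
    δ * sqn x ≤ x ⬝ᵥ (S *ᵥ x) := by
  have h2 := h.dotProduct_mulVec_nonneg x
  rw [star_trivial, sub_mulVec, dotProduct_sub, smul_mulVec, one_mulVec,
    dotProduct_smul] at h2
  have : δ • (x ⬝ᵥ x) = δ * sqn x := rfl
  linarith [this ▸ h2]

lemma upper_quad (h : ((M:ℝ) • 1 - S).PosSemidef) (x : Fin d → ℝ) :
    x ⬝ᵥ (S *ᵥ x) ≤ M * sqn x := by
  have h2 := h.dotProduct_mulVec_nonneg x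
  rw [star_trivial, sub_mulVec, dotProduct_sub, smul_mulVec, one_mulVec,
    dotProduct_smul] at h2
  have : M • (x ⬝ᵥ x) = M * sqn x := rfl
  linarith [this ▸ h2]

lemma isHermitian_of_isSymm (hs : S.IsSymm) : S.IsHermitian := by
  unfold Matrix.IsHermitian
  ext i j
  simp [Matrix.conjTranspose_apply]
  exact congrFun (congrFun hs i) j

lemma posDef_of (hδ : 0 < δ) (hs : S.IsSymm) (h : (S - δ • 1).PosSemidef) : S.PosDef := by
  refine PosDef.of_dotProduct_mulVec_pos (isHermitian_of_isSymm hs) fun x hx => ?_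
  rw [star_trivial]
  have h1 := lower_quad h x
  have h2 : 0 < sqn x := by
    have hnn : (0:ℝ) ≤ x ⬝ᵥ x := by
      simpa using dotProduct_self_star_nonneg (R := ℝ) x
    rcases lt_or_eq_of_le hnn with h' | h'
    · exact h'
    · exact absurd (dotProduct_self_eq_zero.mp h'.symm) hx
  calc (0:ℝ) < δ * sqn x := by positivity
    _ ≤ _ := h1

/-! ### Eigenvalue and determinant bounds -/

lemma eig_bound (hH : S.IsHermitian)
    (hlo : ∀ x, δ * sqn x ≤ x ⬝ᵥ (S *ᵥ x)) (hhi : ∀ x, x ⬝ᵥ (S *ᵥ x) ≤ M * sqn x) (i : Fin d) :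
    δ ≤ hH.eigenvalues i ∧ hH.eigenvalues i ≤ M := by
  have hv : ‖hH.eigenvectorBasis i‖ = 1 := hH.eigenvectorBasis.orthonormal.1 i
  set v : Fin d → ℝ := ⇑(hH.eigenvectorBasis i) with hvdef
  have hsqn : sqn v = 1 := by
    have : sqn v = ‖hH.eigenvectorBasis i‖ ^ 2 := by
      rw [EuclideanSpace.norm_eq, Real.sq_sqrt (by positivity)]
      simp [sqn, dotProduct, pow_two, Real.norm_eq_abs, abs_mul_abs_self]
      rfl
    rw [this, hv, one_pow]
  have heq : hH.eigenvalues i = v ⬝ᵥ (S *ᵥ v) := by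
    have := hH.eigenvalues_eq i
    simpa [star_trivial] using this
  constructor
  · have := hlo v; rw [hsqn] at this; rw [heq]; linarith
  · have := hhi v; rw [hsqn] at this; rw [heq]; linarith

lemma det_bounds (hδ : 0 < δ) (hH : S.IsHermitian)
    (hlo : ∀ x, δ * sqn x ≤ x ⬝ᵥ (S *ᵥ x)) (hhi : ∀ x, x ⬝ᵥ (S *ᵥ x) ≤ M * sqn x) :
    δ ^ d ≤ S.det ∧ S.det ≤ M ^ d := by
  have hdet : S.det = ∏ i, hH.eigenvalues i := by
    simpa using hH.det_eq_prod_eigenvalues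
  constructor
  · rw [hdet]
    calc δ ^ d = ∏ _i : Fin d, δ := by simp
      _ ≤ ∏ i, hH.eigenvalues i :=
        Finset.prod_le_prod (fun i _ => hδ.le) (fun i _ => (eig_bound hH hlo hhi i).1)
  · rw [hdet]
    calc (∏ i, hH.eigenvalues i) ≤ ∏ _i : Fin d, M :=
        Finset.prod_le_prod (fun i _ => hδ.le.trans (eig_bound hH hlo hhi i).1)
          (fun i _ => (eig_bound hH hlo hhi i).2)
      _ = M ^ d := by simp

/-! ### Inverse quadratic form bounds -/

lemma shuffle (hs : S.IsSymm) (u v : Fin d → ℝ) :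
    (S *ᵥ u) ⬝ᵥ v = u ⬝ᵥ (S *ᵥ v) := by
  rw [dotProduct_mulVec, ← mulVec_transpose, hs.eq, dotProduct_comm]

lemma mulVec_inv_cancel (hdet : IsUnit S.det) (x : Fin d → ℝ) :
    S *ᵥ (S⁻¹ *ᵥ x) = x := by
  rw [mulVec_mulVec, Matrix.mul_nonsing_inv S hdet, one_mulVec]

lemma q_eq (hs : S.IsSymm) (hdet : IsUnit S.det) (x : Fin d → ℝ) :
    x ⬝ᵥ (S⁻¹ *ᵥ x) = (S⁻¹ *ᵥ x) ⬝ᵥ (S *ᵥ (S⁻¹ *ᵥ x)) := by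
  set y := S⁻¹ *ᵥ x with hy
  have hxy : S *ᵥ y = x := mulVec_inv_cancel hdet x
  calc x ⬝ᵥ y = (S *ᵥ y) ⬝ᵥ y := by rw [hxy]
    _ = y ⬝ᵥ (S *ᵥ y) := shuffle hs y y

lemma sqrt_sqn_inv_le (hδ : 0 < δ) (hs : S.IsSymm) (hdet : IsUnit S.det)
    (hlo : ∀ x, δ * sqn x ≤ x ⬝ᵥ (S *ᵥ x)) (x : Fin d → ℝ) :
    Real.sqrt (sqn (S⁻¹ *ᵥ x)) ≤ Real.sqrt (sqn x) / δ := by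
  set y := S⁻¹ *ᵥ x with hy
  set a := Real.sqrt (sqn y) with ha
  set b := Real.sqrt (sqn x) with hb
  have ha2 : a ^ 2 = sqn y := Real.sq_sqrt (sqn_nonneg y)
  have hb2 : b ^ 2 = sqn x := Real.sq_sqrt (sqn_nonneg x)
  have ha0 : 0 ≤ a := Real.sqrt_nonneg _
  have hb0 : 0 ≤ b := Real.sqrt_nonneg _
  have hyl : δ * sqn y ≤ x ⬝ᵥ y := by
    have := hlo y
    rwa [← q_eq hs hdet x] at this
  have hCS : x ⬝ᵥ y ≤ b * a := by
    have h1 : |x ⬝ᵥ y| ≤ b * a := dot_abs_le x y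
    exact (le_abs_self _).trans h1
  have key : δ * a ^ 2 ≤ b * a := by rw [ha2]; linarith
  rcases eq_or_lt_of_le ha0 with h0 | h0
  · rw [← h0]; positivity
  · have : δ * a ≤ b := by nlinarith [key]
    rw [le_div_iff₀ hδ]; linarith

lemma q_upper (hδ : 0 < δ) (hs : S.IsSymm) (hdet : IsUnit S.det)
    (hlo : ∀ x, δ * sqn x ≤ x ⬝ᵥ (S *ᵥ x)) (x : Fin d → ℝ) :
    x ⬝ᵥ (S⁻¹ *ᵥ x) ≤ sqn x / δ := by
  set y := S⁻¹ *ᵥ x with hy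
  set a := Real.sqrt (sqn y) with ha
  set b := Real.sqrt (sqn x) with hb
  have hb2 : b ^ 2 = sqn x := Real.sq_sqrt (sqn_nonneg x)
  have ha0 : 0 ≤ a := Real.sqrt_nonneg _
  have hb0 : 0 ≤ b := Real.sqrt_nonneg _
  have hCS : x ⬝ᵥ y ≤ b * a := (le_abs_self _).trans (dot_abs_le x y)
  have hay : a ≤ b / δ := sqrt_sqn_inv_le hδ hs hdet hlo x
  calc x ⬝ᵥ y ≤ b * a := hCS
    _ ≤ b * (b / δ) := by apply mul_le_mul_of_nonneg_left hay hb0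
    _ = sqn x / δ := by rw [← hb2]; ring

lemma q_lower (hδ : 0 < δ) (hM : 0 < M) (hs : S.IsSymm) (hdet : IsUnit S.det)
    (hlo : ∀ x, δ * sqn x ≤ x ⬝ᵥ (S *ᵥ x)) (hhi : ∀ x, x ⬝ᵥ (S *ᵥ x) ≤ M * sqn x)
    (x : Fin d → ℝ) :
    sqn x / M ≤ x ⬝ᵥ (S⁻¹ *ᵥ x) := by
  set y := S⁻¹ *ᵥ x with hy
  have hxy : S *ᵥ y = x := mulVec_inv_cancel hdet x
  have hq : x ⬝ᵥ y = y ⬝ᵥ (S *ᵥ y) := q_eq hs hdet x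
  rcases eq_or_lt_of_le (sqn_nonneg x) with h0 | h0
  · have hx0 : x = 0 := dotProduct_self_eq_zero.mp h0.symm
    rw [← h0]
    simp only [hx0, zero_dotProduct, zero_div, le_refl]
  · set p := x ⬝ᵥ (S *ᵥ x) with hp
    have hp0 : 0 < p := lt_of_lt_of_le (by positivity) (hlo x)
    have hpM : p ≤ M * sqn x := hhi x
    have hySx : y ⬝ᵥ (S *ᵥ x) = sqn x := by
      rw [← shuffle hs, hxy]; rfl
    have key : ∀ t : ℝ, 0 ≤ t ^ 2 * p - 2 * t * sqn x + x ⬝ᵥ y := by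
      intro t
      have h1 : 0 ≤ (t • x - y) ⬝ᵥ (S *ᵥ (t • x - y)) :=
        le_trans (by have := sqn_nonneg (t • x - y); positivity) (hlo _)
      have h2 : (t • x - y) ⬝ᵥ (S *ᵥ (t • x - y)) = t ^ 2 * p - 2 * t * sqn x + x ⬝ᵥ y := by
        rw [Matrix.mulVec_sub, Matrix.mulVec_smul, sub_dotProduct, dotProduct_sub,
          dotProduct_sub, smul_dotProduct, dotProduct_smul, dotProduct_smul, hxy,
          smul_dotProduct, hySx, hq]
        have : x ⬝ᵥ x = sqn x := rfl
        simp only [smul_eq_mul, this]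
        rw [dotProduct_comm y x, hq]
        ring
      linarith [h2 ▸ h1]
    have hkey := key (sqn x / p)
    have hrw : (sqn x / p) ^ 2 * p = sqn x ^ 2 / p := by field_simp
    rw [hrw] at hkey
    have hq2 : sqn x ^ 2 / p ≤ x ⬝ᵥ y := by
      have : 2 * (sqn x / p) * sqn x = 2 * (sqn x ^ 2 / p) := by field_simp
      linarith [hkey, this ▸ hkey]
    have : sqn x / M ≤ sqn x ^ 2 / p := by
      rw [div_le_div_iff₀ hM hp0]
      nlinarith [hpM, h0]
    linarith

/-! ### Entry bounds -/

lemma entry_bound (hM : 0 ≤ M) (hs : S.IsSymm)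
    (h0 : ∀ x, 0 ≤ x ⬝ᵥ (S *ᵥ x)) (hhi : ∀ x, x ⬝ᵥ (S *ᵥ x) ≤ M * sqn x) (i j : Fin d) :
    |S i j| ≤ M := by
  set u : Fin d → ℝ := Pi.single i 1
  set v : Fin d → ℝ := Pi.single j 1
  have hvu : v ⬝ᵥ (S *ᵥ u) = u ⬝ᵥ (S *ᵥ v) := by
    rw [← shuffle hs, dotProduct_comm]
  have hpar : sqn (u + v) + sqn (u - v) = 2 * sqn u + 2 * sqn v := by
    simp only [sqn, dotProduct_add, add_dotProduct, dotProduct_sub, sub_dotProduct]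
    ring
  have hid : (u + v) ⬝ᵥ (S *ᵥ (u + v)) - (u - v) ⬝ᵥ (S *ᵥ (u - v)) = 4 * (u ⬝ᵥ (S *ᵥ v)) := by
    rw [Matrix.mulVec_add, Matrix.mulVec_sub]
    simp only [dotProduct_add, add_dotProduct, dotProduct_sub, sub_dotProduct]
    rw [hvu]; ring
  have h1 := h0 (u + v)
  have h2 := h0 (u - v)
  have h3 := hhi (u + v)
  have h4 := hhi (u - v)
  have hsu : sqn u = 1 := by simp [sqn, dotProduct, Pi.single_apply, u]
  have hsv : sqn v = 1 := by simp [sqn, dotProduct, Pi.single_apply, v]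
  have hX : u ⬝ᵥ (S *ᵥ v) = S i j := by
    simp [dotProduct, mulVec, Pi.single_apply, u, v]
  have hsp : 0 ≤ sqn (u + v) := sqn_nonneg _
  have hsm : 0 ≤ sqn (u - v) := sqn_nonneg _
  rw [abs_le]
  constructor <;> nlinarith [h1, h2, h3, h4, hpar, hid, mul_nonneg hM hsp, mul_nonneg hM hsm]

/-! ### Determinant Lipschitz bound -/

lemma det_row_bound (m : Fin d → (Fin d → ℝ)) :
    ‖Matrix.detRowAlternating (R := ℝ) (n := Fin d) m‖ ≤ (d.factorial : ℝ) * ∏ i, ‖m i‖ := by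
  have : Matrix.detRowAlternating (R := ℝ) (n := Fin d) m = (Matrix.of m).det := rfl
  rw [this, Matrix.det_apply]
  calc ‖∑ σ : Equiv.Perm (Fin d), Equiv.Perm.sign σ • ∏ i, (Matrix.of m) (σ i) i‖
      ≤ ∑ σ : Equiv.Perm (Fin d), ‖Equiv.Perm.sign σ • ∏ i, (Matrix.of m) (σ i) i‖ :=
        norm_sum_le _ _
    _ ≤ ∑ σ : Equiv.Perm (Fin d), ∏ i, ‖m i‖ := by
        apply Finset.sum_le_sum
        intro σ _
        have h1 : ‖Equiv.Perm.sign σ • ∏ i, (Matrix.of m) (σ i) i‖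
            = ‖∏ i, (Matrix.of m) (σ i) i‖ := by
          rcases Int.units_eq_one_or (Equiv.Perm.sign σ) with h | h <;>
            simp [h, Units.smul_def, norm_neg]
        rw [h1]
        calc ‖∏ i, (Matrix.of m) (σ i) i‖ = ∏ i, ‖m (σ i) i‖ := by
              rw [norm_prod]; rfl
          _ ≤ ∏ i, ‖m (σ i)‖ := by
              apply Finset.prod_le_prod (fun i _ => norm_nonneg _)
              intro i _
              exact norm_le_pi_norm (m (σ i)) i
          _ = ∏ i, ‖m i‖ := Equiv.prod_comp σ (fun i => ‖m i‖)
    _ = (d.factorial : ℝ) * ∏ i, ‖m i‖ := by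
        rw [Finset.sum_const, Finset.card_univ, nsmul_eq_mul]
        congr 2
        simp [Fintype.card_perm]

lemma det_lipschitz {R : ℝ} (hR : 0 ≤ R) (A B : Matrix (Fin d) (Fin d) ℝ)
    (hA : ∀ i j, |A i j| ≤ R) (hB : ∀ i j, |B i j| ≤ R) :
    |A.det - B.det| ≤ (d.factorial : ℝ) * d * R ^ (d - 1) * frobNorm (A - B) := by
  have key := (Matrix.detRowAlternating (R := ℝ)
      (n := Fin d)).toMultilinearMap.norm_image_sub_le_of_bound
    (C := (d.factorial : ℝ)) (by positivity) det_row_bound (fun i => A i) (fun i => B i)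
  have hdetA : (Matrix.detRowAlternating (R := ℝ) (n := Fin d)).toMultilinearMap
      (fun i => A i) = A.det := rfl
  have hdetB : (Matrix.detRowAlternating (R := ℝ) (n := Fin d)).toMultilinearMap
      (fun i => B i) = B.det := rfl
  rw [hdetA, hdetB] at key
  have hnormA : ‖(fun i => A i : Fin d → Fin d → ℝ)‖ ≤ R := by
    apply pi_norm_le_iff_of_nonneg hR |>.mpr
    intro i
    apply pi_norm_le_iff_of_nonneg hR |>.mpr
    intro j
    simpa [Real.norm_eq_abs] using hA i j
  have hnormB : ‖(fun i => B i : Fin d → Fin d → ℝ)‖ ≤ R := by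
    apply pi_norm_le_iff_of_nonneg hR |>.mpr
    intro i
    apply pi_norm_le_iff_of_nonneg hR |>.mpr
    intro j
    simpa [Real.norm_eq_abs] using hB i j
  have hnormdiff : ‖((fun i => A i) - (fun i => B i) : Fin d → (Fin d → ℝ))‖
      ≤ frobNorm (A - B) := by
    apply pi_norm_le_iff_of_nonneg (frobNorm_nonneg _) |>.mpr
    intro i
    apply pi_norm_le_iff_of_nonneg (frobNorm_nonneg _) |>.mpr
    intro j
    simpa [Real.norm_eq_abs] using entry_le_frob (A - B) i j
  have hcard : (Fintype.card (Fin d)) = d := by simp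
  rw [Real.norm_eq_abs] at key
  calc |A.det - B.det|
      ≤ (d.factorial : ℝ) * (Fintype.card (Fin d)) *
          max ‖(fun i => A i : Fin d → Fin d → ℝ)‖ ‖(fun i => B i : Fin d → Fin d → ℝ)‖
            ^ (Fintype.card (Fin d) - 1) *
          ‖((fun i => A i) - (fun i => B i) : Fin d → (Fin d → ℝ))‖ := key
    _ ≤ (d.factorial : ℝ) * d * R ^ (d - 1) * frobNorm (A - B) := by
        rw [hcard]
        apply mul_le_mul
        · apply mul_le_mul_of_nonneg_left _ (by positivity)
          apply pow_le_pow_left₀ (le_max_iff.mpr (Or.inl (norm_nonneg _))) _ _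
          exact max_le hnormA hnormB
        · exact hnormdiff
        · exact norm_nonneg _
        · positivity

/-! ### Scalar helper lemmas -/

lemma inv_sqrt_diff {a b s : ℝ} (hs : 0 < s) (ha : s ≤ a) (hb : s ≤ b) :
    |1 / Real.sqrt a - 1 / Real.sqrt b| ≤ |a - b| / (2 * Real.sqrt s ^ 3) := by
  have hsa : 0 < Real.sqrt a := Real.sqrt_pos.mpr (hs.trans_le ha)
  have hsb : 0 < Real.sqrt b := Real.sqrt_pos.mpr (hs.trans_le hb)
  have hss : 0 < Real.sqrt s := Real.sqrt_pos.mpr hs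
  have hsa' : Real.sqrt s ≤ Real.sqrt a := Real.sqrt_le_sqrt ha
  have hsb' : Real.sqrt s ≤ Real.sqrt b := Real.sqrt_le_sqrt hb
  have ha2 : Real.sqrt a ^ 2 = a := Real.sq_sqrt (hs.le.trans ha)
  have hb2 : Real.sqrt b ^ 2 = b := Real.sq_sqrt (hs.le.trans hb)
  have key : 1 / Real.sqrt a - 1 / Real.sqrt b
      = (b - a) / (Real.sqrt a * Real.sqrt b * (Real.sqrt a + Real.sqrt b)) := by
    rw [div_sub_div _ _ (ne_of_gt hsa) (ne_of_gt hsb)]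
    rw [div_eq_div_iff (by positivity) (by positivity)]
    linear_combination Real.sqrt a * Real.sqrt b * hb2 - Real.sqrt a * Real.sqrt b * ha2
  rw [key, abs_div]
  have habs : |Real.sqrt a * Real.sqrt b * (Real.sqrt a + Real.sqrt b)|
      = Real.sqrt a * Real.sqrt b * (Real.sqrt a + Real.sqrt b) := by
    apply abs_of_pos; positivity
  rw [habs, abs_sub_comm b a]
  apply div_le_div_of_nonneg_left (abs_nonneg _) (by positivity)
  calc 2 * Real.sqrt s ^ 3 = Real.sqrt s * Real.sqrt s * (Real.sqrt s + Real.sqrt s) := by ring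
    _ ≤ Real.sqrt a * Real.sqrt b * (Real.sqrt a + Real.sqrt b) := by
        apply mul_le_mul
        · apply mul_le_mul hsa' hsb' hss.le hsa.le
        · linarith
        · positivity
        · positivity

lemma exp_diff {u v L : ℝ} (hu : L ≤ u) (hv : L ≤ v) :
    |Real.exp (-u) - Real.exp (-v)| ≤ |u - v| * Real.exp (-L) := by
  wlog h : u ≤ v generalizing u v
  · rw [abs_sub_comm, abs_sub_comm u v]
    exact this hv hu (le_of_not_ge h)
  have h1 : Real.exp (-v) ≤ Real.exp (-u) := Real.exp_le_exp.mpr (by linarith)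
  rw [abs_of_nonneg (by linarith), abs_of_nonpos (by linarith)]
  have h2 : Real.exp (-u) - Real.exp (-v) = Real.exp (-u) * (1 - Real.exp (u - v)) := by
    rw [mul_sub, mul_one, ← Real.exp_add]; ring_nf
  rw [h2]
  have h3 : 1 - Real.exp (u - v) ≤ v - u := by
    have := Real.add_one_le_exp (u - v)
    linarith
  have h4 : Real.exp (-u) ≤ Real.exp (-L) := Real.exp_le_exp.mpr (by linarith)
  have h5 : 0 ≤ 1 - Real.exp (u - v) := by
    have : Real.exp (u - v) ≤ 1 := Real.exp_le_one_iff.mpr (by linarith)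
    linarith
  calc Real.exp (-u) * (1 - Real.exp (u - v)) ≤ Real.exp (-L) * (v - u) := by
        apply mul_le_mul h4 h3 h5 (Real.exp_nonneg _)
    _ = -(u - v) * Real.exp (-L) := by ring

/-! ### Integrability and continuity -/

lemma integrable_env {b : ℝ} (hb : 0 < b) :
    Integrable (fun x : Fin d → ℝ => Real.exp (-b * sqn x)) := by
  have heq : (fun x : Fin d → ℝ => Real.exp (-b * sqn x))
      = fun x : Fin d → ℝ => ∏ i, Real.exp (-b * (x i) ^ 2) := by
    funext x
    rw [← Real.exp_sum]
    congr 1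
    rw [sqn_eq, Finset.mul_sum]
  rw [heq]
  exact Integrable.fintype_prod (f := fun (_ : Fin d) (t : ℝ) => Real.exp (-b * t ^ 2))
    (fun _ => integrable_exp_neg_mul_sq hb)

lemma continuous_quad (A : Matrix (Fin d) (Fin d) ℝ) :
    Continuous (fun x : Fin d → ℝ => x ⬝ᵥ (A *ᵥ x)) := by
  simp only [dotProduct, mulVec]
  apply continuous_finset_sum
  intro i _
  exact (continuous_apply i).mul
    (continuous_finset_sum _ fun j _ => continuous_const.mul (continuous_apply j))

lemma continuous_gpdf (S : Matrix (Fin d) (Fin d) ℝ) :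
    Continuous (gaussianPDF d S) := by
  unfold gaussianPDF
  exact continuous_const.mul
    (Real.continuous_exp.comp (continuous_const.mul (continuous_quad S⁻¹)))

end GA

/-! ### Constants -/

noncomputable def GAK1 (d : ℕ) (δ M : ℝ) : ℝ :=
  ((d.factorial : ℝ) * d * M ^ (d - 1)) / (2 * Real.sqrt (δ ^ d) ^ 3)

noncomputable def GAK2 (d : ℕ) (δ : ℝ) : ℝ := 1 / (2 * δ ^ 2 * Real.sqrt (δ ^ d))

noncomputable def GAC2 (d : ℕ) (δ M : ℝ) : ℝ := GAK1 d δ M + 4 * M * GAK2 d δ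

set_option maxHeartbeats 2000000 in
/-- The pointwise bound on the difference of Gaussian densities. -/
lemma gaussian_pointwise_bound (d : ℕ) (δ M : ℝ) (hδ : 0 < δ) (hδM : δ ≤ M)
    (S₁ S₂ : Matrix (Fin d) (Fin d) ℝ)
    (hs₁ : S₁.IsSymm) (hs₂ : S₂.IsSymm)
    (h₁l : (S₁ - δ • 1).PosSemidef) (h₁u : ((M : ℝ) • 1 - S₁).PosSemidef)
    (h₂l : (S₂ - δ • 1).PosSemidef) (h₂u : ((M : ℝ) • 1 - S₂).PosSemidef)
    (x : Fin d → ℝ) :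
    |gaussianPDF d S₁ x - gaussianPDF d S₂ x| ≤
      frobNorm (S₁ - S₂) * ((2 * Real.pi) ^ (-(d : ℝ) / 2) * GAC2 d δ M) *
        Real.exp (-(1 / (4 * M)) * GA.sqn x) := by
  have hMpos : 0 < M := lt_of_lt_of_le hδ hδM
  -- facts about S₁ and S₂
  have hlo₁ := GA.lower_quad h₁l
  have hhi₁ := GA.upper_quad h₁u
  have hlo₂ := GA.lower_quad h₂l
  have hhi₂ := GA.upper_quad h₂u
  have hpd₁ : S₁.PosDef := GA.posDef_of hδ hs₁ h₁l
  have hpd₂ : S₂.PosDef := GA.posDef_of hδ hs₂ h₂l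
  have hdet₁pos : 0 < S₁.det := hpd₁.det_pos
  have hdet₂pos : 0 < S₂.det := hpd₂.det_pos
  have hdu₁ : IsUnit S₁.det := isUnit_iff_ne_zero.mpr hdet₁pos.ne'
  have hdu₂ : IsUnit S₂.det := isUnit_iff_ne_zero.mpr hdet₂pos.ne'
  have hdb₁ := GA.det_bounds hδ (GA.isHermitian_of_isSymm hs₁) hlo₁ hhi₁
  have hdb₂ := GA.det_bounds hδ (GA.isHermitian_of_isSymm hs₂) hlo₂ hhi₂
  -- notation
  set t : ℝ := GA.sqn x with ht
  have ht0 : 0 ≤ t := GA.sqn_nonneg x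
  set F : ℝ := frobNorm (S₁ - S₂) with hF
  have hF0 : 0 ≤ F := GA.frobNorm_nonneg _
  set b : ℝ := 1 / (4 * M) with hb
  have hbpos : 0 < b := by rw [hb]; positivity
  set q₁ : ℝ := x ⬝ᵥ (S₁⁻¹ *ᵥ x) with hq₁
  set q₂ : ℝ := x ⬝ᵥ (S₂⁻¹ *ᵥ x) with hq₂
  have hq₁l : t / M ≤ q₁ := GA.q_lower hδ hMpos hs₁ hdu₁ hlo₁ hhi₁ x
  have hq₂l : t / M ≤ q₂ := GA.q_lower hδ hMpos hs₂ hdu₂ hlo₂ hhi₂ x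
  set sδ : ℝ := Real.sqrt (δ ^ d) with hsδ
  have hsδpos : 0 < sδ := Real.sqrt_pos.mpr (by positivity)
  set e : ℝ := Real.exp (-(b * t)) with he
  have he0 : 0 ≤ e := Real.exp_nonneg _
  have he1 : e ≤ 1 := Real.exp_le_one_iff.mpr (by nlinarith)
  set P : ℝ := (2 * Real.pi) ^ (-(d : ℝ) / 2) with hP
  have hPpos : 0 < P := Real.rpow_pos_of_pos (by positivity) _
  set D₁ : ℝ := S₁.det ^ (-(1 : ℝ) / 2) with hD₁
  set D₂ : ℝ := S₂.det ^ (-(1 : ℝ) / 2) with hD₂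
  set E₁ : ℝ := Real.exp (-(1 / 2) * q₁) with hE₁
  set E₂ : ℝ := Real.exp (-(1 / 2) * q₂) with hE₂
  clear_value t F b q₁ q₂ sδ e P D₁ D₂ E₁ E₂
  -- rewrite D as 1/sqrt
  have hDeq : ∀ a : ℝ, 0 < a → a ^ (-(1 : ℝ) / 2) = 1 / Real.sqrt a := by
    intro a ha
    rw [show (-(1 : ℝ) / 2) = -(1 / 2 : ℝ) by norm_num, Real.rpow_neg ha.le,
      ← Real.sqrt_eq_rpow, one_div]
  have hD₁eq : D₁ = 1 / Real.sqrt S₁.det := by rw [hD₁, hDeq _ hdet₁pos]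
  have hD₂eq : D₂ = 1 / Real.sqrt S₂.det := by rw [hD₂, hDeq _ hdet₂pos]
  -- exp(-(t/(2M))) = e * e
  have hee : Real.exp (-(t / (2 * M))) = e * e := by
    rw [he, ← Real.exp_add]
    congr 1
    rw [hb]
    ring
  -- bound on |D₁ - D₂|
  have hdet_diff : |S₁.det - S₂.det| ≤ ((d.factorial : ℝ) * d * M ^ (d - 1)) * F := by
    have hent₁ : ∀ i j, |S₁ i j| ≤ M := GA.entry_bound hMpos.le hs₁
      (fun y => le_trans (mul_nonneg hδ.le (GA.sqn_nonneg y)) (hlo₁ y)) hhi₁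
    have hent₂ : ∀ i j, |S₂ i j| ≤ M := GA.entry_bound hMpos.le hs₂
      (fun y => le_trans (mul_nonneg hδ.le (GA.sqn_nonneg y)) (hlo₂ y)) hhi₂
    rw [hF]
    exact GA.det_lipschitz hMpos.le S₁ S₂ hent₁ hent₂
  have hDdiff : |D₁ - D₂| ≤ GAK1 d δ M * F := by
    rw [hD₁eq, hD₂eq]
    refine le_trans (GA.inv_sqrt_diff (s := δ ^ d) (by positivity) hdb₁.1 hdb₂.1) ?_
    rw [show GAK1 d δ M * F = ((d.factorial : ℝ) * d * M ^ (d - 1)) * F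
        / (2 * Real.sqrt (δ ^ d) ^ 3) by unfold GAK1; ring]
    gcongr
  -- bound on D₂
  have hD₂le : D₂ ≤ 1 / sδ := by
    rw [hD₂eq]
    have h1 : sδ ≤ Real.sqrt S₂.det := by rw [hsδ]; exact Real.sqrt_le_sqrt hdb₂.1
    exact one_div_le_one_div_of_le hsδpos h1
  have hD₂0 : 0 ≤ D₂ := by rw [hD₂eq]; positivity
  -- bound on E₁
  have hE₁le : E₁ ≤ e * e := by
    rw [hE₁, ← hee]
    apply Real.exp_le_exp.mpr
    have : t / (2 * M) = (t / M) / 2 := by ring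
    nlinarith [hq₁l]
  have hE₁0 : 0 ≤ E₁ := by rw [hE₁]; exact Real.exp_nonneg _
  -- bound on |q₁ - q₂|
  have hqdiff : |q₁ - q₂| ≤ F * t / δ ^ 2 := by
    set u : Fin d → ℝ := S₁⁻¹ *ᵥ x with hu
    set v : Fin d → ℝ := S₂⁻¹ *ᵥ x with hv
    have hiden : q₁ - q₂ = u ⬝ᵥ ((S₂ - S₁) *ᵥ v) := by
      rw [Matrix.sub_mulVec, dotProduct_sub]
      have e1 : u ⬝ᵥ (S₂ *ᵥ v) = q₁ := by
        rw [hv, GA.mulVec_inv_cancel hdu₂ x, dotProduct_comm, hq₁, hu]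
      have e2 : u ⬝ᵥ (S₁ *ᵥ v) = q₂ := by
        rw [← GA.shuffle hs₁, hu, GA.mulVec_inv_cancel hdu₁ x, hq₂, hv]
      rw [e1, e2]
    have hub : Real.sqrt (GA.sqn u) ≤ Real.sqrt t / δ := by
      rw [hu, ht]; exact GA.sqrt_sqn_inv_le hδ hs₁ hdu₁ hlo₁ x
    have hvb : Real.sqrt (GA.sqn v) ≤ Real.sqrt t / δ := by
      rw [hv, ht]; exact GA.sqrt_sqn_inv_le hδ hs₂ hdu₂ hlo₂ x
    have hfr : frobNorm (S₂ - S₁) = F := by rw [hF, GA.frobNorm_sub_comm]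
    calc |q₁ - q₂| = |u ⬝ᵥ ((S₂ - S₁) *ᵥ v)| := by rw [hiden]
      _ ≤ frobNorm (S₂ - S₁) * (Real.sqrt (GA.sqn u) * Real.sqrt (GA.sqn v)) :=
          GA.quad_abs_le _ u v
      _ ≤ F * ((Real.sqrt t / δ) * (Real.sqrt t / δ)) := by
          rw [hfr]
          apply mul_le_mul_of_nonneg_left _ hF0
          apply mul_le_mul hub hvb (Real.sqrt_nonneg _) (by positivity)
      _ = F * t / δ ^ 2 := by
          rw [div_mul_div_comm, Real.mul_self_sqrt ht0]
          ring
  -- bound on |E₁ - E₂|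
  have hEdiff : |E₁ - E₂| ≤ (F * t / δ ^ 2) / 2 * (e * e) := by
    have hhalf : t / (2 * M) = (t / M) / 2 := by ring
    have hu1 : t / (2 * M) ≤ (1 / 2) * q₁ := by rw [hhalf]; linarith [hq₁l]
    have hu2 : t / (2 * M) ≤ (1 / 2) * q₂ := by rw [hhalf]; linarith [hq₂l]
    have h1 : |E₁ - E₂| ≤ |(1 / 2) * q₁ - (1 / 2) * q₂| * Real.exp (-(t / (2 * M))) := by
      rw [hE₁, hE₂, show -(1 / 2 : ℝ) * q₁ = -((1 / 2 : ℝ) * q₁) by ring,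
        show -(1 / 2 : ℝ) * q₂ = -((1 / 2 : ℝ) * q₂) by ring]
      exact GA.exp_diff hu1 hu2
    have h2 : |(1 / 2 : ℝ) * q₁ - (1 / 2) * q₂| = |q₁ - q₂| / 2 := by
      rw [show (1 / 2 : ℝ) * q₁ - (1 / 2) * q₂ = (q₁ - q₂) / 2 by ring, abs_div]
      norm_num
    calc |E₁ - E₂| ≤ |(1 / 2) * q₁ - (1 / 2) * q₂| * Real.exp (-(t / (2 * M))) := h1
      _ = (|q₁ - q₂| / 2) * (e * e) := by rw [h2, hee]
      _ ≤ (F * t / δ ^ 2) / 2 * (e * e) := by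
          apply mul_le_mul_of_nonneg_right _ (by positivity)
          linarith [hqdiff]
  -- nonnegativity of the constants
  have hK1nn : 0 ≤ GAK1 d δ M := by
    unfold GAK1
    apply div_nonneg _ (by positivity)
    exact mul_nonneg (mul_nonneg (Nat.cast_nonneg _) (Nat.cast_nonneg _))
      (pow_nonneg hMpos.le _)
  have hK2nn : 0 ≤ GAK2 d δ := by
    unfold GAK2
    exact div_nonneg zero_le_one (by positivity)
  -- the bound t * e ≤ 4 * M
  have hte : t * e ≤ 4 * M := by
    have hsle : b * t ≤ Real.exp (b * t) := by linarith [Real.add_one_le_exp (b * t)]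
    have hexp1 : e * Real.exp (b * t) = 1 := by rw [he, ← Real.exp_add]; simp
    have h4Mb : 4 * M * b = 1 := by rw [hb]; field_simp
    have fact1 : 4 * M * e * (b * t) ≤ 4 * M * e * Real.exp (b * t) :=
      mul_le_mul_of_nonneg_left hsle (by positivity)
    have lhs_eq : 4 * M * e * (b * t) = t * e := by linear_combination t * e * h4Mb
    have rhs_eq : 4 * M * e * Real.exp (b * t) = 4 * M := by rw [mul_assoc, hexp1, mul_one]
    linarith
  -- splitting the difference of densities
  have hsplit : gaussianPDF d S₁ x - gaussianPDF d S₂ x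
      = P * ((D₁ - D₂) * E₁ + D₂ * (E₁ - E₂)) := by
    simp only [gaussianPDF]
    rw [hP, hD₁, hD₂, hE₁, hE₂, hq₁, hq₂]
    ring
  -- final assembly
  calc |gaussianPDF d S₁ x - gaussianPDF d S₂ x|
      = P * |(D₁ - D₂) * E₁ + D₂ * (E₁ - E₂)| := by
        rw [hsplit, abs_mul, abs_of_pos hPpos]
    _ ≤ P * (|D₁ - D₂| * E₁ + D₂ * |E₁ - E₂|) := by
        apply mul_le_mul_of_nonneg_left _ hPpos.le
        refine (abs_add_le _ _).trans ?_
        rw [abs_mul, abs_mul, abs_of_nonneg hE₁0, abs_of_nonneg hD₂0]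
    _ ≤ P * ((GAK1 d δ M * F) * (e * e) + (1 / sδ) * ((F * t / δ ^ 2) / 2 * (e * e))) := by
        apply mul_le_mul_of_nonneg_left _ hPpos.le
        have t1 : |D₁ - D₂| * E₁ ≤ (GAK1 d δ M * F) * (e * e) :=
          mul_le_mul hDdiff hE₁le hE₁0 (by positivity)
        have t2 : D₂ * |E₁ - E₂| ≤ (1 / sδ) * ((F * t / δ ^ 2) / 2 * (e * e)) :=
          mul_le_mul hD₂le hEdiff (abs_nonneg _) (by positivity)
        linarith
    _ = P * (F * (GAK1 d δ M * (e * e) + GAK2 d δ * t * (e * e))) := by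
        simp only [GAK2]
        rw [hsδ]
        ring
    _ ≤ P * (F * (GAC2 d δ M * e)) := by
        apply mul_le_mul_of_nonneg_left _ hPpos.le
        apply mul_le_mul_of_nonneg_left _ hF0
        have hA : GAK1 d δ M * (e * e) ≤ GAK1 d δ M * e := by
          have h := mul_le_mul_of_nonneg_left he1 (mul_nonneg hK1nn he0)
          calc GAK1 d δ M * (e * e) = GAK1 d δ M * e * e := by ring
            _ ≤ GAK1 d δ M * e * 1 := h
            _ = GAK1 d δ M * e := by ring
        have hB : GAK2 d δ * t * (e * e) ≤ 4 * M * GAK2 d δ * e := by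
          have h := mul_le_mul_of_nonneg_left hte (mul_nonneg hK2nn he0)
          calc GAK2 d δ * t * (e * e) = GAK2 d δ * e * (t * e) := by ring
            _ ≤ GAK2 d δ * e * (4 * M) := h
            _ = 4 * M * GAK2 d δ * e := by ring
        simp only [GAC2]
        linarith
    _ = F * (P * GAC2 d δ M) * Real.exp (-b * t) := by
        rw [neg_mul, ← he]
        ring

/-- Lipschitz bound, uniform over `δI ⪯ Σ ⪯ MI`, of the `L¹` distance between
centered Gaussian densities in terms of the norm of the difference of covariances:
`∫ |φ_{Σ₁} − φ_{Σ₂}| ≤ c ‖Σ₁ − Σ₂‖`, i.e. a total-variation bound for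
`N(0, Σ₁)` versus `N(0, Σ₂)`. -/
theorem gaussian_L1_lipschitz_in_covariance
    (d : ℕ) (hd : 0 < d) (δ M : ℝ) (hδ : 0 < δ) (hδM : δ ≤ M) :
    ∃ c > 0, ∀ S₁ S₂ : Matrix (Fin d) (Fin d) ℝ,
      S₁.IsSymm → S₂.IsSymm →
      (S₁ - δ • 1).PosSemidef → ((M : ℝ) • 1 - S₁).PosSemidef →
      (S₂ - δ • 1).PosSemidef → ((M : ℝ) • 1 - S₂).PosSemidef →
      ∫ x : Fin d → ℝ, |gaussianPDF d S₁ x - gaussianPDF d S₂ x| ≤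
        c * frobNorm (S₁ - S₂) := by
  have hMpos : 0 < M := lt_of_lt_of_le hδ hδM
  set P : ℝ := (2 * Real.pi) ^ (-(d : ℝ) / 2) with hP
  have hPpos : 0 < P := Real.rpow_pos_of_pos (by positivity) _
  have hC2nn : 0 ≤ GAC2 d δ M := by
    have h1 : 0 ≤ GAK1 d δ M := by
      unfold GAK1
      apply div_nonneg _ (by positivity)
      exact mul_nonneg (mul_nonneg (Nat.cast_nonneg _) (Nat.cast_nonneg _))
        (pow_nonneg hMpos.le _)
    have h2 : 0 ≤ GAK2 d δ := by
      unfold GAK2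
      exact div_nonneg zero_le_one (by positivity)
    unfold GAC2
    have h3 : (0:ℝ) ≤ 4 * M := by positivity
    exact add_nonneg h1 (mul_nonneg h3 h2)
  set I : ℝ := ∫ x : Fin d → ℝ, Real.exp (-(1 / (4 * M)) * GA.sqn x) with hI
  have hI0 : 0 ≤ I := integral_nonneg fun x => Real.exp_nonneg _
  have hPCInn : 0 ≤ P * GAC2 d δ M * I :=
    mul_nonneg (mul_nonneg hPpos.le hC2nn) hI0
  refine ⟨P * GAC2 d δ M * I + 1, by linarith, ?_⟩
  intro S₁ S₂ hs₁ hs₂ h₁l h₁u h₂l h₂u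
  have hpt : ∀ x : Fin d → ℝ, |gaussianPDF d S₁ x - gaussianPDF d S₂ x| ≤
      frobNorm (S₁ - S₂) * (P * GAC2 d δ M) * Real.exp (-(1 / (4 * M)) * GA.sqn x) :=
    fun x => gaussian_pointwise_bound d δ M hδ hδM S₁ S₂ hs₁ hs₂ h₁l h₁u h₂l h₂u x
  have hbpos : (0:ℝ) < 1 / (4 * M) := by positivity
  have hint : Integrable (fun x : Fin d → ℝ => Real.exp (-(1 / (4 * M)) * GA.sqn x)) :=
    GA.integrable_env hbpos
  have hGint : Integrable (fun x : Fin d → ℝ =>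
      frobNorm (S₁ - S₂) * (P * GAC2 d δ M) * Real.exp (-(1 / (4 * M)) * GA.sqn x)) :=
    hint.const_mul _
  have hmeas : AEStronglyMeasurable
      (fun x : Fin d → ℝ => |gaussianPDF d S₁ x - gaussianPDF d S₂ x|) volume :=
    (((GA.continuous_gpdf S₁).sub (GA.continuous_gpdf S₂)).abs).aestronglyMeasurable
  have hfint : Integrable (fun x : Fin d → ℝ => |gaussianPDF d S₁ x - gaussianPDF d S₂ x|) :=
    hGint.mono' hmeas (ae_of_all _ fun x => by
      rw [Real.norm_eq_abs, abs_abs]; exact hpt x)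
  have hF0 : 0 ≤ frobNorm (S₁ - S₂) := GA.frobNorm_nonneg _
  calc ∫ x : Fin d → ℝ, |gaussianPDF d S₁ x - gaussianPDF d S₂ x|
      ≤ ∫ x : Fin d → ℝ, frobNorm (S₁ - S₂) * (P * GAC2 d δ M) *
          Real.exp (-(1 / (4 * M)) * GA.sqn x) := integral_mono hfint hGint hpt
    _ = frobNorm (S₁ - S₂) * (P * GAC2 d δ M) * I := by
        rw [hI]; exact integral_const_mul _ _
    _ = (P * GAC2 d δ M * I) * frobNorm (S₁ - S₂) := by ring
    _ ≤ (P * GAC2 d δ M * I + 1) * frobNorm (S₁ - S₂) :=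
        mul_le_mul_of_nonneg_right (by linarith) hF0
end

section
/- (Finite-dimensional diminishing adaptation, Theorem 2.2 analogue.) Let d be a positive integer, R > 0, δ > 0, and let a : ℝ^d × ℝ^d → [0, 1] be measurable. For n ≥ 2 and points x₁, …, x_n ∈ ℝ^d with ‖x_i‖ ≤ R, let Σ_n = (1/(n−1)) ∑_{i=1}^{n} (x_i − x̄_n)(x_i − x̄_n)ᵀ + δ I with x̄_n = (1/n) ∑_{i=1}^{n} x_i, and define the Metropolis–Hastings-type kernel Q_n(u, A) = ∫_A a(u, v) φ_{Σ_n}(v − u) dv + 1_A(u)(1 − ∫_{ℝ^d} a(u, v) φ_{Σ_n}(v − u) dv). Then there exists a constant γ > 0, depending only on d, R, δ, such that for every n ≥ 2, every sequence x₁, …, x_{n+1} ∈ ℝ^d with ‖x_i‖ ≤ R, every u ∈ ℝ^d, and every measurable A ⊆ ℝ^d, |Q_n(u, A) − Q_{n+1}(u, A)| ≤ γ/n. -/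
set_option maxHeartbeats 1000000

open MeasureTheory Finset Matrix

/-- The Euclidean norm on `ℝ^d`. -/
noncomputable def eucNorm {d : ℕ} (y : Fin d → ℝ) : ℝ :=
  Real.sqrt (∑ j, y j ^ 2)

/-- The empirical mean of the first `n` points. -/
noncomputable def empMean (d n : ℕ) (x : ℕ → Fin d → ℝ) : Fin d → ℝ :=
  (n : ℝ)⁻¹ • ∑ i ∈ Finset.range n, x i

/-- The regularized empirical covariance
`Σ_n = (1/(n−1)) ∑_{i=1}^n (x_i − x̄_n)(x_i − x̄_n)ᵀ + δ I`. -/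
noncomputable def empCov (d n : ℕ) (δ : ℝ) (x : ℕ → Fin d → ℝ) :
    Matrix (Fin d) (Fin d) ℝ :=
  ((n : ℝ) - 1)⁻¹ •
      (∑ i ∈ Finset.range n,
        Matrix.vecMulVec (x i - empMean d n x) (x i - empMean d n x)) +
    δ • 1

/-- The Metropolis–Hastings-type transition probability with Gaussian random-walk
proposal `N(u, S)` and acceptance function `a`:
`Q(u, A) = ∫_A a(u,v) φ_S(v−u) dv + 1_A(u)(1 − ∫ a(u,v) φ_S(v−u) dv)`. -/
noncomputable def mhProb (d : ℕ) (a : (Fin d → ℝ) × (Fin d → ℝ) → ℝ)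
    (S : Matrix (Fin d) (Fin d) ℝ) (u : Fin d → ℝ) (A : Set (Fin d → ℝ)) : ℝ :=
  (∫ v in A, a (u, v) * gaussianPDF d S (v - u)) +
    Set.indicator A (fun _ => 1 - ∫ v, a (u, v) * gaussianPDF d S (v - u)) u

noncomputable def mConst (d : ℕ) (δ K : ℝ) : ℝ := δ / (K * d) ^ 2

noncomputable def gamma0 (d : ℕ) (δ K : ℝ) : ℝ :=
  (2 * Real.pi) ^ (-(d : ℝ) / 2) *
    ((d.factorial * d * (max K 1) ^ d) / (2 * Real.sqrt (δ ^ d) * δ ^ d) +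
      (Real.sqrt (δ ^ d))⁻¹ * ((d : ℝ) ^ 3 / (2 * δ ^ 2)) * (4 / mConst d δ K))

noncomputable def gamma1 (d : ℕ) (δ K : ℝ) : ℝ :=
  2 * gamma0 d δ K * (Real.sqrt (Real.pi / (mConst d δ K / 4))) ^ d


section scalar

lemma rpow_neg_half_eq {a : ℝ} (ha : 0 < a) : a ^ (-(1:ℝ)/2) = (Real.sqrt a)⁻¹ := by
  rw [neg_div, Real.rpow_neg ha.le, Real.sqrt_eq_rpow]

lemma inv_sqrt_diff_le {a b c : ℝ} (hc : 0 < c) (ha : c ≤ a) (hb : c ≤ b) :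
    |(Real.sqrt a)⁻¹ - (Real.sqrt b)⁻¹| ≤ |a - b| / (2 * Real.sqrt c * c) := by
  have ha0 : 0 < a := lt_of_lt_of_le hc ha
  have hb0 : 0 < b := lt_of_lt_of_le hc hb
  have hsa : 0 < Real.sqrt a := Real.sqrt_pos.mpr ha0
  have hsb : 0 < Real.sqrt b := Real.sqrt_pos.mpr hb0
  have hsc : 0 < Real.sqrt c := Real.sqrt_pos.mpr hc
  have hca : Real.sqrt c ≤ Real.sqrt a := Real.sqrt_le_sqrt ha
  have hcb : Real.sqrt c ≤ Real.sqrt b := Real.sqrt_le_sqrt hb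
  have hid : (Real.sqrt b - Real.sqrt a) * (Real.sqrt b + Real.sqrt a) = b - a := by
    have h1 := Real.sq_sqrt ha0.le
    have h2 := Real.sq_sqrt hb0.le
    nlinarith
  have hkey : (Real.sqrt a)⁻¹ - (Real.sqrt b)⁻¹
      = (b - a) / ((Real.sqrt b + Real.sqrt a) * (Real.sqrt a * Real.sqrt b)) := by
    rw [← hid]
    field_simp
  rw [hkey, abs_div]
  have hd1 : 0 < (Real.sqrt b + Real.sqrt a) * (Real.sqrt a * Real.sqrt b) := by positivity
  rw [abs_of_pos hd1]
  have h3 : 2 * Real.sqrt c * c ≤ (Real.sqrt b + Real.sqrt a) * (Real.sqrt a * Real.sqrt b) := by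
    have h4 : c ≤ Real.sqrt a * Real.sqrt b := by
      calc c = Real.sqrt c * Real.sqrt c := (Real.mul_self_sqrt hc.le).symm
        _ ≤ Real.sqrt a * Real.sqrt b := mul_le_mul hca hcb hsc.le hsa.le
    have h5 : 2 * Real.sqrt c ≤ Real.sqrt b + Real.sqrt a := by linarith
    calc 2 * Real.sqrt c * c ≤ 2 * Real.sqrt c * (Real.sqrt a * Real.sqrt b) :=
          mul_le_mul_of_nonneg_left h4 (by positivity)
      _ ≤ (Real.sqrt b + Real.sqrt a) * (Real.sqrt a * Real.sqrt b) :=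
          mul_le_mul_of_nonneg_right h5 (by positivity)
  rw [abs_sub_comm b a]
  exact div_le_div_of_nonneg_left (abs_nonneg _) (by positivity) h3

lemma exp_neg_diff_le {u v w : ℝ} (hu : w ≤ u) (hv : w ≤ v) :
    |Real.exp (-u) - Real.exp (-v)| ≤ Real.exp (-w) * |u - v| := by
  have key : ∀ p q : ℝ, w ≤ p → p ≤ q →
      Real.exp (-p) - Real.exp (-q) ≤ Real.exp (-w) * (q - p) := by
    intro p q hp hpq
    have h1 : Real.exp (-p) - Real.exp (-q) = Real.exp (-p) * (1 - Real.exp (-(q - p))) := by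
      rw [mul_sub, mul_one, ← Real.exp_add]
      ring_nf
    rw [h1]
    have h2 : 1 - Real.exp (-(q - p)) ≤ q - p := by
      have := Real.add_one_le_exp (-(q - p))
      linarith
    have h3 : Real.exp (-p) ≤ Real.exp (-w) := Real.exp_le_exp.mpr (by linarith)
    have h4 : 0 ≤ 1 - Real.exp (-(q - p)) := by
      have : Real.exp (-(q - p)) ≤ 1 := Real.exp_le_one_iff.mpr (by linarith)
      linarith
    exact mul_le_mul h3 h2 h4 (Real.exp_nonneg _)
  rcases le_total u v with h | h
  · have hnn : Real.exp (-v) ≤ Real.exp (-u) := Real.exp_le_exp.mpr (by linarith)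
    rw [abs_of_nonneg (by linarith), abs_of_nonpos (by linarith)]
    have := key u v hu h
    linarith
  · have hnn : Real.exp (-u) ≤ Real.exp (-v) := Real.exp_le_exp.mpr (by linarith)
    rw [abs_of_nonpos (by linarith), abs_of_nonneg (by linarith)]
    have := key v u hv h
    linarith

lemma weight_bound {s t : ℝ} (hs : 0 < s) (ht : 0 ≤ t) :
    t * Real.exp (-(2 * s * t)) ≤ s⁻¹ * Real.exp (-(s * t)) := by
  have hE : (0:ℝ) < Real.exp (s * t) := Real.exp_pos _
  have h2 : s * t ≤ Real.exp (s * t) := by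
    have := Real.add_one_le_exp (s * t)
    have hst : 0 ≤ s * t := mul_nonneg hs.le ht
    linarith
  have h3 : t * Real.exp (-(s * t)) ≤ s⁻¹ := by
    rw [Real.exp_neg, ← div_eq_mul_inv, div_le_iff₀ hE]
    calc t = s⁻¹ * (s * t) := by field_simp
      _ ≤ s⁻¹ * Real.exp (s * t) := mul_le_mul_of_nonneg_left h2 (inv_nonneg.mpr hs.le)
  have h4 : t * Real.exp (-(2 * s * t)) = (t * Real.exp (-(s * t))) * Real.exp (-(s * t)) := by
    have h5 : Real.exp (-(2 * s * t)) = Real.exp (-(s * t)) * Real.exp (-(s * t)) := by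
      rw [← Real.exp_add]
      congr 1
      ring
    rw [h5]
    ring
  rw [h4]
  exact mul_le_mul_of_nonneg_right h3 (Real.exp_nonneg _)

end scalar


open MeasureTheory Finset Matrix

section basic

variable {d : ℕ}

/-- exp of a negative multiple of the sum of squares, as a product. -/
lemma exp_neg_sum_sq (c : ℝ) (x : Fin d → ℝ) :
    Real.exp (-c * ∑ j, x j ^ 2) = ∏ j, Real.exp (-c * x j ^ 2) := by
  rw [← Real.exp_sum, Finset.mul_sum]

lemma integrable_gauss {c : ℝ} (hc : 0 < c) :
    Integrable (fun x : Fin d → ℝ => Real.exp (-c * ∑ j, x j ^ 2)) := by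
  have : (fun x : Fin d → ℝ => Real.exp (-c * ∑ j, x j ^ 2))
      = fun x : Fin d → ℝ => ∏ j, Real.exp (-c * x j ^ 2) := by
    funext x; exact exp_neg_sum_sq c x
  rw [this]
  exact Integrable.fintype_prod fun i => integrable_exp_neg_mul_sq hc

lemma integral_gauss {c : ℝ} (hc : 0 < c) :
    ∫ x : Fin d → ℝ, Real.exp (-c * ∑ j, x j ^ 2) = (Real.sqrt (Real.pi / c)) ^ d := by
  have : (fun x : Fin d → ℝ => Real.exp (-c * ∑ j, x j ^ 2))
      = fun x : Fin d → ℝ => ∏ j, Real.exp (-c * x j ^ 2) := by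
    funext x; exact exp_neg_sum_sq c x
  rw [this, MeasureTheory.volume_pi, MeasureTheory.integral_fintype_prod_eq_pow (ι := Fin d)
    (fun t : ℝ => Real.exp (-c * t ^ 2)), integral_gaussian]
  simp

/-- Product difference bound. -/
lemma abs_prod_sub_prod_le {ι : Type*} (s : Finset ι) (f g : ι → ℝ) (K : ℝ)
    (hf : ∀ i ∈ s, |f i| ≤ K) (hg : ∀ i ∈ s, |g i| ≤ K) :
    |∏ i ∈ s, f i - ∏ i ∈ s, g i| ≤ (∑ i ∈ s, |f i - g i|) * (max K 1) ^ s.card := by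
  classical
  induction s using Finset.induction_on with
  | empty => simp
  | @insert a s ha ih =>
    have hK1 : (1 : ℝ) ≤ max K 1 := le_max_right _ _
    have hK0 : (0 : ℝ) ≤ max K 1 := le_trans zero_le_one hK1
    have hfa : |f a| ≤ max K 1 := le_trans (hf a (mem_insert_self a s)) (le_max_left _ _)
    have hga : |g a| ≤ max K 1 := le_trans (hg a (mem_insert_self a s)) (le_max_left _ _)
    have hfs : ∀ i ∈ s, |f i| ≤ K := fun i hi => hf i (mem_insert_of_mem hi)
    have hgs : ∀ i ∈ s, |g i| ≤ K := fun i hi => hg i (mem_insert_of_mem hi)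
    have hprodf : |∏ i ∈ s, f i| ≤ (max K 1) ^ s.card := by
      rw [Finset.abs_prod]
      calc ∏ i ∈ s, |f i| ≤ ∏ i ∈ s, (max K 1) := by
            refine Finset.prod_le_prod (fun i _ => abs_nonneg _) fun i hi =>
              le_trans (hfs i hi) (le_max_left _ _)
        _ = (max K 1) ^ s.card := by rw [Finset.prod_const]
    rw [Finset.prod_insert ha, Finset.prod_insert ha, Finset.sum_insert ha,
      Finset.card_insert_of_notMem ha]
    have key : f a * ∏ i ∈ s, f i - g a * ∏ i ∈ s, g i
        = (f a - g a) * ∏ i ∈ s, f i + g a * (∏ i ∈ s, f i - ∏ i ∈ s, g i) := by ring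
    rw [key]
    calc |(f a - g a) * ∏ i ∈ s, f i + g a * (∏ i ∈ s, f i - ∏ i ∈ s, g i)|
        ≤ |f a - g a| * |∏ i ∈ s, f i| + |g a| * |∏ i ∈ s, f i - ∏ i ∈ s, g i| := by
          refine le_trans (abs_add_le _ _) ?_
          rw [abs_mul, abs_mul]
      _ ≤ |f a - g a| * (max K 1) ^ s.card
            + (max K 1) * ((∑ i ∈ s, |f i - g i|) * (max K 1) ^ s.card) := by
          have A1 : |f a - g a| * |∏ i ∈ s, f i| ≤ |f a - g a| * (max K 1) ^ s.card :=
            mul_le_mul_of_nonneg_left hprodf (abs_nonneg _)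
          have A2 : |g a| * |∏ i ∈ s, f i - ∏ i ∈ s, g i|
              ≤ (max K 1) * ((∑ i ∈ s, |f i - g i|) * (max K 1) ^ s.card) :=
            mul_le_mul hga (ih hfs hgs) (abs_nonneg _) hK0
          linarith
      _ ≤ (|f a - g a| + ∑ i ∈ s, |f i - g i|) * (max K 1) ^ (s.card + 1) := by
          rw [add_mul, pow_succ]
          have h1 : |f a - g a| * (max K 1) ^ s.card
              ≤ |f a - g a| * ((max K 1) ^ s.card * max K 1) := by
            exact mul_le_mul_of_nonneg_left
              (le_mul_of_one_le_right (pow_nonneg hK0 _) hK1) (abs_nonneg _)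
          have h2 : max K 1 * ((∑ i ∈ s, |f i - g i|) * (max K 1) ^ s.card)
              = (∑ i ∈ s, |f i - g i|) * ((max K 1) ^ s.card * max K 1) := by ring
          linarith

end basic

section mat

variable {d : ℕ}

lemma det_diff_le (S T : Matrix (Fin d) (Fin d) ℝ) (K ε : ℝ)
    (hS : ∀ i j, |S i j| ≤ K) (hT : ∀ i j, |T i j| ≤ K)
    (hd : ∀ i j, |S i j - T i j| ≤ ε) (hε : 0 ≤ ε) :
    |S.det - T.det| ≤ (d.factorial : ℝ) * ((d : ℝ) * ε) * (max K 1) ^ d := by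
  rw [Matrix.det_apply, Matrix.det_apply, ← Finset.sum_sub_distrib]
  refine le_trans (Finset.abs_sum_le_sum_abs _ _) ?_
  have key : ∀ σ : Equiv.Perm (Fin d),
      |Equiv.Perm.sign σ • ∏ i, S (σ i) i - Equiv.Perm.sign σ • ∏ i, T (σ i) i|
        ≤ ((d : ℝ) * ε) * (max K 1) ^ d := by
    intro σ
    have h1 : Equiv.Perm.sign σ • ∏ i, S (σ i) i
        - Equiv.Perm.sign σ • ∏ i, T (σ i) i
        = ((Equiv.Perm.sign σ : ℤ) : ℝ) * (∏ i, S (σ i) i - ∏ i, T (σ i) i) := by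
      rw [mul_sub]
      norm_num [Units.smul_def, zsmul_eq_mul]
    rw [h1, abs_mul]
    have h2 : |((Equiv.Perm.sign σ : ℤ) : ℝ)| = 1 := by
      rcases Int.units_eq_one_or (Equiv.Perm.sign σ) with h | h <;> rw [h] <;> norm_num
    rw [h2, one_mul]
    refine le_trans (abs_prod_sub_prod_le Finset.univ
      (fun i => S (σ i) i) (fun i => T (σ i) i) K (fun i _ => hS _ _) (fun i _ => hT _ _)) ?_
    have h3 : ∑ i : Fin d, |S (σ i) i - T (σ i) i| ≤ (d : ℝ) * ε := by
      calc ∑ i : Fin d, |S (σ i) i - T (σ i) i| ≤ ∑ _i : Fin d, ε :=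
            Finset.sum_le_sum fun i _ => hd _ _
        _ = (d : ℝ) * ε := by simp [mul_comm]
    have h4 : (0:ℝ) ≤ (max K 1) ^ (Finset.univ : Finset (Fin d)).card :=
      pow_nonneg (le_trans zero_le_one (le_max_right _ _)) _
    calc (∑ i : Fin d, |S (σ i) i - T (σ i) i|) * (max K 1) ^ (Finset.univ : Finset (Fin d)).card
        ≤ ((d:ℝ) * ε) * (max K 1) ^ (Finset.univ : Finset (Fin d)).card :=
          mul_le_mul_of_nonneg_right h3 h4
      _ = ((d:ℝ) * ε) * (max K 1) ^ d := by rw [Finset.card_univ, Fintype.card_fin]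
  calc ∑ σ : Equiv.Perm (Fin d),
        |Equiv.Perm.sign σ • ∏ i, S (σ i) i - Equiv.Perm.sign σ • ∏ i, T (σ i) i|
      ≤ ∑ _σ : Equiv.Perm (Fin d), ((d : ℝ) * ε) * (max K 1) ^ d :=
        Finset.sum_le_sum fun σ _ => key σ
    _ = (d.factorial : ℝ) * (((d : ℝ) * ε) * (max K 1) ^ d) := by
        rw [Finset.sum_const, Finset.card_univ, Fintype.card_perm, Fintype.card_fin,
          nsmul_eq_mul]
    _ = (d.factorial : ℝ) * ((d : ℝ) * ε) * (max K 1) ^ d := by ring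


end mat


open MeasureTheory Finset Matrix

section mat2

variable {d : ℕ}

lemma sum_abs_sq_le' (x : Fin d → ℝ) :
    (∑ i, |x i|) ^ 2 ≤ (d : ℝ) * ∑ i, x i ^ 2 := by
  have := Finset.sum_mul_sq_le_sq_mul_sq Finset.univ (fun _ : Fin d => (1:ℝ)) (fun i => |x i|)
  simpa [sq_abs, Finset.card_univ, mul_comm] using this

lemma mulVec_abs_le (M : Matrix (Fin d) (Fin d) ℝ) {c : ℝ} (hM : ∀ i j, |M i j| ≤ c)
    (x : Fin d → ℝ) (i : Fin d) : |(M *ᵥ x) i| ≤ c * ∑ j, |x j| := by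
  have : (M *ᵥ x) i = ∑ j, M i j * x j := rfl
  rw [this, Finset.mul_sum]
  refine le_trans (Finset.abs_sum_le_sum_abs _ _) (Finset.sum_le_sum fun j _ => ?_)
  rw [abs_mul]
  exact mul_le_mul_of_nonneg_right (hM i j) (abs_nonneg _)

lemma dot_form_bound (M : Matrix (Fin d) (Fin d) ℝ) {c : ℝ} (hc : 0 ≤ c)
    (hM : ∀ i j, |M i j| ≤ c) (x : Fin d → ℝ) :
    |x ⬝ᵥ M *ᵥ x| ≤ c * ((d:ℝ) * ∑ i, x i ^ 2) := by
  have h0 : x ⬝ᵥ M *ᵥ x = ∑ i, x i * (M *ᵥ x) i := rfl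
  rw [h0]
  have habs : ∀ i : Fin d, |x i * (M *ᵥ x) i| ≤ |x i| * (c * ∑ j, |x j|) := fun i => by
    rw [abs_mul]
    exact mul_le_mul_of_nonneg_left (mulVec_abs_le M hM x i) (abs_nonneg _)
  calc |∑ i, x i * (M *ᵥ x) i| ≤ ∑ i, |x i * (M *ᵥ x) i| := Finset.abs_sum_le_sum_abs _ _
    _ ≤ ∑ i, |x i| * (c * ∑ j, |x j|) := Finset.sum_le_sum fun i _ => habs i
    _ = c * (∑ i, |x i|) ^ 2 := by rw [← Finset.sum_mul]; ring
    _ ≤ c * ((d:ℝ) * ∑ i, x i ^ 2) := mul_le_mul_of_nonneg_left (sum_abs_sq_le' x) hc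

lemma mulVec_sq_sum_le (M : Matrix (Fin d) (Fin d) ℝ) {c : ℝ} (hc : 0 ≤ c)
    (hM : ∀ i j, |M i j| ≤ c) (x : Fin d → ℝ) :
    ∑ i, ((M *ᵥ x) i) ^ 2 ≤ (c * d) ^ 2 * ∑ i, x i ^ 2 := by
  have h1 : ∀ i : Fin d, ((M *ᵥ x) i) ^ 2 ≤ (c * ∑ j, |x j|) ^ 2 := fun i => by
    rw [← sq_abs]
    have h := mulVec_abs_le M hM x i
    have h2 : (0:ℝ) ≤ |(M *ᵥ x) i| := abs_nonneg _
    nlinarith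
  calc ∑ i, ((M *ᵥ x) i) ^ 2 ≤ ∑ _i : Fin d, (c * ∑ j, |x j|) ^ 2 :=
        Finset.sum_le_sum fun i _ => h1 i
    _ = (d : ℝ) * (c^2 * (∑ j, |x j|)^2) := by
        rw [Finset.sum_const, Finset.card_univ, Fintype.card_fin, nsmul_eq_mul]
        ring
    _ ≤ (d : ℝ) * (c^2 * ((d:ℝ) * ∑ i, x i ^ 2)) := by
        exact mul_le_mul_of_nonneg_left
          (mul_le_mul_of_nonneg_left (sum_abs_sq_le' x) (sq_nonneg c)) (Nat.cast_nonneg d)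
    _ = (c * d) ^ 2 * ∑ i, x i ^ 2 := by ring

/-- Cauchy–Schwarz for dotProduct. -/
lemma dot_sq_le (x y : Fin d → ℝ) :
    (x ⬝ᵥ y) ^ 2 ≤ (∑ i, x i ^ 2) * ∑ i, y i ^ 2 :=
  Finset.sum_mul_sq_le_sq_mul_sq Finset.univ x y

end mat2


open MeasureTheory Finset Matrix

section spec

variable {d : ℕ} {S : Matrix (Fin d) (Fin d) ℝ} {δ K : ℝ}

lemma sq_sum_pos_of_ne_zero {x : Fin d → ℝ} (hx : x ≠ 0) : 0 < ∑ i, x i ^ 2 := by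
  have h := Function.ne_iff.mp hx
  obtain ⟨i, hi⟩ := h
  have h1 : 0 < x i ^ 2 := pow_two_pos_of_ne_zero (by simpa using hi)
  have h2 : ∀ j ∈ Finset.univ, (0:ℝ) ≤ x j ^ 2 := fun j _ => sq_nonneg _
  exact lt_of_lt_of_le h1 (Finset.single_le_sum h2 (Finset.mem_univ i))

lemma posDef_of_form (hδ : 0 < δ) (hsym : S.IsHermitian)
    (hform : ∀ x : Fin d → ℝ, δ * ∑ i, x i ^ 2 ≤ x ⬝ᵥ S *ᵥ x) : S.PosDef := by
  refine Matrix.PosDef.of_dotProduct_mulVec_pos hsym fun x hx => ?_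
  have h1 : 0 < δ * ∑ i, x i ^ 2 := mul_pos hδ (sq_sum_pos_of_ne_zero hx)
  have h2 := hform x
  simpa using lt_of_lt_of_le h1 h2

lemma eigenvalues_ge (hδ : 0 < δ) (hsym : S.IsHermitian)
    (hform : ∀ x : Fin d → ℝ, δ * ∑ i, x i ^ 2 ≤ x ⬝ᵥ S *ᵥ x) (i : Fin d) :
    δ ≤ hsym.eigenvalues i := by
  have hv := hsym.eigenvalues_eq i
  set v : Fin d → ℝ := ⇑(hsym.eigenvectorBasis i) with hvdef
  have hnorm : ‖hsym.eigenvectorBasis i‖ = 1 := hsym.eigenvectorBasis.orthonormal.1 i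
  have hsum : ∑ j, v j ^ 2 = 1 := by
    have := EuclideanSpace.norm_eq (hsym.eigenvectorBasis i)
    rw [hnorm] at this
    have h2 : Real.sqrt (∑ j, ‖(hsym.eigenvectorBasis i) j‖ ^ 2) = 1 := this.symm
    have h3 : (∑ j, ‖(hsym.eigenvectorBasis i) j‖ ^ 2) = 1 := by
      have h4 : (0:ℝ) ≤ ∑ j, ‖(hsym.eigenvectorBasis i) j‖ ^ 2 :=
        Finset.sum_nonneg fun j _ => sq_nonneg _
      nlinarith [Real.sq_sqrt h4]
    simpa [Real.norm_eq_abs, sq_abs] using h3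
  have hform' := hform v
  rw [hsum, mul_one] at hform'
  rw [hv]
  simpa [star_trivial] using hform'

lemma det_ge (hδ : 0 < δ) (hsym : S.IsHermitian)
    (hform : ∀ x : Fin d → ℝ, δ * ∑ i, x i ^ 2 ≤ x ⬝ᵥ S *ᵥ x) :
    δ ^ d ≤ S.det := by
  have h := hsym.det_eq_prod_eigenvalues
  have h2 : S.det = ∏ i, hsym.eigenvalues i := by
    simpa using h
  rw [h2]
  calc δ ^ d = ∏ _i : Fin d, δ := by rw [Finset.prod_const, Finset.card_univ, Fintype.card_fin]
    _ ≤ ∏ i, hsym.eigenvalues i :=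
        Finset.prod_le_prod (fun _ _ => le_of_lt hδ) fun i _ => eigenvalues_ge hδ hsym hform i

end spec


open MeasureTheory Finset Matrix

section inv

variable {d : ℕ} {S : Matrix (Fin d) (Fin d) ℝ} {δ K : ℝ}

lemma mulVec_inv_cancel (hdet : S.det ≠ 0) (x : Fin d → ℝ) :
    S *ᵥ (S⁻¹ *ᵥ x) = x := by
  rw [Matrix.mulVec_mulVec, Matrix.mul_nonsing_inv S (isUnit_iff_ne_zero.mpr hdet),
    Matrix.one_mulVec]

lemma inv_entries_le (hδ : 0 < δ) (hdet : S.det ≠ 0)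
    (hform : ∀ x : Fin d → ℝ, δ * ∑ i, x i ^ 2 ≤ x ⬝ᵥ S *ᵥ x) (i j : Fin d) :
    |S⁻¹ i j| ≤ 1 / δ := by
  set y : Fin d → ℝ := S⁻¹ *ᵥ Pi.single j 1 with hy
  have hyi : ∀ k, y k = S⁻¹ k j := fun k => by
    simp [hy, Matrix.mulVec_single]
  have hSy : S *ᵥ y = Pi.single j 1 := mulVec_inv_cancel hdet _
  set N : ℝ := ∑ k, y k ^ 2 with hN
  have hN0 : 0 ≤ N := Finset.sum_nonneg fun k _ => sq_nonneg _
  have h1 : δ * N ≤ y j := by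
    have := hform y
    rw [hSy] at this
    simpa [dotProduct_single] using this
  have h2 : (y j) ^ 2 ≤ N := by
    exact Finset.single_le_sum (fun k _ => sq_nonneg (y k)) (Finset.mem_univ j)
  have h3 : N ≤ 1 / δ ^ 2 := by
    rcases eq_or_lt_of_le hN0 with h | h
    · rw [← h]; positivity
    · have hyj : 0 ≤ y j := le_trans (mul_nonneg hδ.le hN0) h1
      have h4 : (δ * N) ^ 2 ≤ (y j) ^ 2 := pow_le_pow_left₀ (mul_nonneg hδ.le hN0) h1 2
      have h5 : δ ^ 2 * N ^ 2 ≤ N := by nlinarith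
      rw [le_div_iff₀ (pow_pos hδ 2)]
      nlinarith
  have h6 : (S⁻¹ i j) ^ 2 ≤ 1 / δ ^ 2 := by
    rw [← hyi i]
    exact le_trans (Finset.single_le_sum (fun k _ => sq_nonneg (y k)) (Finset.mem_univ i)) h3
  calc |S⁻¹ i j| = Real.sqrt ((S⁻¹ i j) ^ 2) := (Real.sqrt_sq_eq_abs _).symm
    _ ≤ Real.sqrt (1 / δ ^ 2) := Real.sqrt_le_sqrt h6
    _ = 1 / δ := by
      rw [one_div, Real.sqrt_inv, Real.sqrt_sq (le_of_lt hδ), one_div]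

lemma inv_form_ge (hd : 0 < d) (hδ : 0 < δ) (hKpos : 0 < K) (hdet : S.det ≠ 0)
    (hK : ∀ i j, |S i j| ≤ K)
    (hform : ∀ x : Fin d → ℝ, δ * ∑ i, x i ^ 2 ≤ x ⬝ᵥ S *ᵥ x) (x : Fin d → ℝ) :
    δ / (K * d) ^ 2 * ∑ i, x i ^ 2 ≤ x ⬝ᵥ S⁻¹ *ᵥ x := by
  set y : Fin d → ℝ := S⁻¹ *ᵥ x with hy
  have hSy : S *ᵥ y = x := mulVec_inv_cancel hdet x
  have h1 : x ⬝ᵥ S⁻¹ *ᵥ x = y ⬝ᵥ (S *ᵥ y) := by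
    rw [hSy, ← hy, dotProduct_comm]
  have h2 : δ * ∑ i, y i ^ 2 ≤ y ⬝ᵥ (S *ᵥ y) := hform y
  have h3 : ∑ i, x i ^ 2 ≤ (K * d) ^ 2 * ∑ i, y i ^ 2 := by
    rw [← hSy]
    exact mulVec_sq_sum_le S (le_of_lt hKpos) hK y
  have hKd : (0:ℝ) < (K * d) ^ 2 := by
    have : (0:ℝ) < K * d := mul_pos hKpos (by exact_mod_cast hd)
    positivity
  have hy0 : 0 ≤ ∑ i, y i ^ 2 := Finset.sum_nonneg fun k _ => sq_nonneg _
  rw [h1]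
  rw [div_mul_eq_mul_div, div_le_iff₀ hKd] at *
  nlinarith

end inv

section core

variable {d : ℕ} {S T : Matrix (Fin d) (Fin d) ℝ} {δ K ε : ℝ}

lemma triple_entry_bound (A B C : Matrix (Fin d) (Fin d) ℝ) {a b c : ℝ}
    (ha : 0 ≤ a) (hb : 0 ≤ b) (hc : 0 ≤ c)
    (hA : ∀ i j, |A i j| ≤ a) (hB : ∀ i j, |B i j| ≤ b) (hC : ∀ i j, |C i j| ≤ c)
    (i j : Fin d) : |(A * B * C) i j| ≤ (d : ℝ) ^ 2 * (a * b * c) := by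
  have hAB : ∀ i l, |(A * B) i l| ≤ (d : ℝ) * (a * b) := by
    intro i l
    rw [Matrix.mul_apply]
    refine le_trans (Finset.abs_sum_le_sum_abs _ _) ?_
    calc ∑ k, |A i k * B k l| ≤ ∑ _k : Fin d, a * b := by
          refine Finset.sum_le_sum fun k _ => ?_
          rw [abs_mul]
          exact mul_le_mul (hA i k) (hB k l) (abs_nonneg _) ha
      _ = (d : ℝ) * (a * b) := by
          rw [Finset.sum_const, Finset.card_univ, Fintype.card_fin, nsmul_eq_mul]
  rw [Matrix.mul_apply]
  refine le_trans (Finset.abs_sum_le_sum_abs _ _) ?_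
  calc ∑ l, |(A * B) i l * C l j| ≤ ∑ _l : Fin d, ((d:ℝ) * (a * b)) * c := by
        refine Finset.sum_le_sum fun l _ => ?_
        rw [abs_mul]
        exact mul_le_mul (hAB i l) (hC l j) (abs_nonneg _)
          (mul_nonneg (Nat.cast_nonneg d) (mul_nonneg ha hb))
    _ = (d : ℝ) ^ 2 * (a * b * c) := by
        rw [Finset.sum_const, Finset.card_univ, Fintype.card_fin, nsmul_eq_mul]
        ring

lemma inv_sub_inv_eq (hS : IsUnit S.det) (hT : IsUnit T.det) :
    S⁻¹ - T⁻¹ = S⁻¹ * (T - S) * T⁻¹ := by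
  rw [mul_sub, sub_mul, mul_assoc S⁻¹ T T⁻¹, Matrix.mul_nonsing_inv T hT, mul_one,
    Matrix.nonsing_inv_mul S hS, one_mul]

lemma pdf_diff_le (hd : 0 < d) (hδ : 0 < δ) (hKpos : 0 < K) (hε : 0 ≤ ε)
    (hSsym : S.IsHermitian) (hTsym : T.IsHermitian)
    (hSK : ∀ i j, |S i j| ≤ K) (hTK : ∀ i j, |T i j| ≤ K)
    (hSform : ∀ x : Fin d → ℝ, δ * ∑ i, x i ^ 2 ≤ x ⬝ᵥ S *ᵥ x)
    (hTform : ∀ x : Fin d → ℝ, δ * ∑ i, x i ^ 2 ≤ x ⬝ᵥ T *ᵥ x)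
    (hdiff : ∀ i j, |S i j - T i j| ≤ ε) (x : Fin d → ℝ) :
    |gaussianPDF d S x - gaussianPDF d T x|
      ≤ gamma0 d δ K * ε * Real.exp (-(mConst d δ K / 4) * ∑ i, x i ^ 2) := by
  set m := mConst d δ K with hm
  set N := ∑ i, x i ^ 2 with hN
  have hdR : (0:ℝ) < d := by exact_mod_cast hd
  have hm0 : 0 < m := div_pos hδ (pow_pos (mul_pos hKpos hdR) 2)
  have hN0 : 0 ≤ N := Finset.sum_nonneg fun k _ => sq_nonneg _
  have hδd : (0:ℝ) < δ ^ d := pow_pos hδ d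
  have hdetS : δ ^ d ≤ S.det := det_ge hδ hSsym hSform
  have hdetT : δ ^ d ≤ T.det := det_ge hδ hTsym hTform
  have hdetS0 : 0 < S.det := lt_of_lt_of_le hδd hdetS
  have hdetT0 : 0 < T.det := lt_of_lt_of_le hδd hdetT
  set c0 := (2 * Real.pi) ^ (-(d : ℝ) / 2) with hc0def
  have hc0 : 0 < c0 := Real.rpow_pos_of_pos (by positivity) _
  set qS := x ⬝ᵥ S⁻¹ *ᵥ x with hqS
  set qT := x ⬝ᵥ T⁻¹ *ᵥ x with hqT
  have hqSm : m * N ≤ qS := inv_form_ge hd hδ hKpos hdetS0.ne' hSK hSform x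
  have hqTm : m * N ≤ qT := inv_form_ge hd hδ hKpos hdetT0.ne' hTK hTform x
  -- determinant part
  have hdetdiff : |S.det - T.det| ≤ (d.factorial : ℝ) * ((d : ℝ) * ε) * (max K 1) ^ d :=
    det_diff_le S T K ε hSK hTK hdiff hε
  have hdS : S.det ^ (-(1:ℝ)/2) = (Real.sqrt S.det)⁻¹ := rpow_neg_half_eq hdetS0
  have hdT : T.det ^ (-(1:ℝ)/2) = (Real.sqrt T.det)⁻¹ := rpow_neg_half_eq hdetT0
  have hA : |S.det ^ (-(1:ℝ)/2) - T.det ^ (-(1:ℝ)/2)|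
      ≤ ((d.factorial : ℝ) * ((d : ℝ) * ε) * (max K 1) ^ d) / (2 * Real.sqrt (δ^d) * δ^d) := by
    rw [hdS, hdT]
    refine le_trans (inv_sqrt_diff_le hδd hdetS hdetT) ?_
    exact div_le_div_of_nonneg_right hdetdiff (by positivity)
  -- dT bound
  have hBt : T.det ^ (-(1:ℝ)/2) ≤ (Real.sqrt (δ^d))⁻¹ := by
    rw [hdT]
    exact inv_anti₀ (Real.sqrt_pos.mpr hδd) (Real.sqrt_le_sqrt hdetT)
  have hBt0 : 0 < T.det ^ (-(1:ℝ)/2) := Real.rpow_pos_of_pos hdetT0 _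
  have hAS0 : 0 < S.det ^ (-(1:ℝ)/2) := Real.rpow_pos_of_pos hdetS0 _
  -- q difference
  have hqdiff : |qS - qT| ≤ ((d:ℝ)^2 * ((1/δ) * ε * (1/δ))) * ((d:ℝ) * N) := by
    have hid : qS - qT = x ⬝ᵥ (S⁻¹ - T⁻¹) *ᵥ x := by
      rw [Matrix.sub_mulVec, dotProduct_sub]
    have hMent : ∀ i j, |(S⁻¹ - T⁻¹) i j| ≤ (d:ℝ)^2 * ((1/δ) * ε * (1/δ)) := by
      intro i j
      rw [inv_sub_inv_eq (isUnit_iff_ne_zero.mpr hdetS0.ne') (isUnit_iff_ne_zero.mpr hdetT0.ne')]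
      refine triple_entry_bound S⁻¹ (T - S) T⁻¹ (by positivity) hε (by positivity)
        (inv_entries_le hδ hdetS0.ne' hSform) (fun i j => ?_)
        (inv_entries_le hδ hdetT0.ne' hTform) i j
      have := hdiff i j
      rw [Matrix.sub_apply]
      rw [abs_sub_comm]
      simpa [abs_sub_comm] using this
    rw [hid]
    exact dot_form_bound _ (by positivity) hMent x
  -- exponential difference
  have hexpdiff : |Real.exp (-(1/2) * qS) - Real.exp (-(1/2) * qT)|
      ≤ Real.exp (-(m/2 * N)) * ((1/2) * |qS - qT|) := by
    have h1 : (-(1/2) * qS : ℝ) = -((1/2) * qS) := by ring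
    have h2 : (-(1/2) * qT : ℝ) = -((1/2) * qT) := by ring
    rw [h1, h2]
    have h3 := exp_neg_diff_le (u := (1/2) * qS) (v := (1/2) * qT) (w := m/2 * N)
      (by linarith) (by linarith)
    refine le_trans h3 ?_
    have h6 : |(1:ℝ)/2 * qS - 1/2 * qT| = (1/2) * |qS - qT| := by
      rw [show ((1:ℝ)/2 * qS - 1/2 * qT) = (1/2) * (qS - qT) from by ring, abs_mul]
      norm_num
    rw [h6]
  -- decomposition
  have hdecomp : gaussianPDF d S x - gaussianPDF d T x
      = c0 * ((S.det ^ (-(1:ℝ)/2) - T.det ^ (-(1:ℝ)/2)) * Real.exp (-(1/2) * qS))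
        + c0 * (T.det ^ (-(1:ℝ)/2) * (Real.exp (-(1/2) * qS) - Real.exp (-(1/2) * qT))) := by
    simp only [gaussianPDF, ← hc0def, ← hqS, ← hqT]
    ring
  rw [hdecomp]
  have hexpS : Real.exp (-(1/2) * qS) ≤ Real.exp (-(m/2 * N)) := by
    apply Real.exp_le_exp.mpr
    nlinarith
  have hemh : Real.exp (-(m/2 * N)) ≤ Real.exp (-(m/4 * N)) := by
    apply Real.exp_le_exp.mpr
    nlinarith
  have hwb : N * Real.exp (-(m/2 * N)) ≤ (m/4)⁻¹ * Real.exp (-(m/4 * N)) := by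
    have := weight_bound (s := m/4) (t := N) (by positivity) hN0
    have h24 : 2 * (m/4) * N = m/2 * N := by ring
    have h44 : (m/4) * N = m/4 * N := rfl
    rw [h24] at this
    exact this
  -- assemble
  have term1 : |c0 * ((S.det ^ (-(1:ℝ)/2) - T.det ^ (-(1:ℝ)/2)) * Real.exp (-(1/2) * qS))|
      ≤ c0 * (((d.factorial : ℝ) * ((d : ℝ) * ε) * (max K 1) ^ d)
          / (2 * Real.sqrt (δ^d) * δ^d)) * Real.exp (-(m/4 * N)) := by
    rw [abs_mul, abs_mul, abs_of_pos hc0, Real.abs_exp, mul_assoc]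
    refine mul_le_mul_of_nonneg_left ?_ hc0.le
    refine mul_le_mul hA (le_trans hexpS hemh) (Real.exp_nonneg _) (by positivity)
  have term2 : |c0 * (T.det ^ (-(1:ℝ)/2) * (Real.exp (-(1/2) * qS) - Real.exp (-(1/2) * qT)))|
      ≤ c0 * ((Real.sqrt (δ^d))⁻¹ * (((d:ℝ)^3 * ε / (2 * δ^2)) * ((m/4)⁻¹)))
          * Real.exp (-(m/4 * N)) := by
    rw [abs_mul, abs_mul, abs_of_pos hc0, abs_of_pos hBt0, mul_assoc]
    refine mul_le_mul_of_nonneg_left ?_ hc0.le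
    have step : |Real.exp (-(1/2) * qS) - Real.exp (-(1/2) * qT)|
        ≤ (((d:ℝ)^3 * ε / (2 * δ^2))) * (N * Real.exp (-(m/2 * N))) := by
      refine le_trans hexpdiff ?_
      have h5 : (1/2 : ℝ) * |qS - qT| ≤ ((d:ℝ)^3 * ε / (2 * δ^2)) * N := by
        have := hqdiff
        have hexpand : ((d:ℝ)^2 * ((1/δ) * ε * (1/δ))) * ((d:ℝ) * N)
            = ((d:ℝ)^3 * ε / δ^2) * N := by
          field_simp
        rw [hexpand] at this
        have hhalf : (d:ℝ)^3 * ε / (2 * δ^2) * N = (1/2) * ((d:ℝ)^3 * ε / δ^2 * N) := by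
          ring
        rw [hhalf]
        linarith
      calc Real.exp (-(m/2 * N)) * ((1/2) * |qS - qT|)
          ≤ Real.exp (-(m/2 * N)) * (((d:ℝ)^3 * ε / (2 * δ^2)) * N) :=
            mul_le_mul_of_nonneg_left h5 (Real.exp_nonneg _)
        _ = (((d:ℝ)^3 * ε / (2 * δ^2))) * (N * Real.exp (-(m/2 * N))) := by ring
    refine le_trans (mul_le_mul hBt step (abs_nonneg _) (by positivity)) ?_
    rw [mul_assoc]
    refine mul_le_mul_of_nonneg_left ?_ (by positivity)
    calc ((d:ℝ)^3 * ε / (2 * δ^2)) * (N * Real.exp (-(m/2 * N)))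
        ≤ ((d:ℝ)^3 * ε / (2 * δ^2)) * ((m/4)⁻¹ * Real.exp (-(m/4 * N))) :=
          mul_le_mul_of_nonneg_left hwb (by positivity)
      _ = ((d:ℝ)^3 * ε / (2 * δ^2) * (m/4)⁻¹) * Real.exp (-(m/4 * N)) := by ring
  refine le_trans (abs_add_le _ _) (le_trans (add_le_add term1 term2) ?_)
  have hfinal : c0 * (((d.factorial : ℝ) * ((d : ℝ) * ε) * (max K 1) ^ d)
          / (2 * Real.sqrt (δ^d) * δ^d))
        + c0 * ((Real.sqrt (δ^d))⁻¹ * (((d:ℝ)^3 * ε / (2 * δ^2)) * ((m/4)⁻¹)))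
      = gamma0 d δ K * ε := by
    rw [gamma0, ← hc0def, ← hm]
    have hminv : ((m:ℝ)/4)⁻¹ = 4 / m := by
      field_simp
    rw [hminv]
    field_simp
  have hrw : -(m/4) * N = -(m/4 * N) := by ring
  rw [hrw, ← add_mul, hfinal]

end core

lemma gamma0_nonneg {d : ℕ} {δ K : ℝ} (hd : 0 < d) (hδ : 0 < δ) (hKpos : 0 < K) :
    0 ≤ gamma0 d δ K := by
  have hdR : (0:ℝ) < d := by exact_mod_cast hd
  have hm0 : 0 < mConst d δ K := div_pos hδ (pow_pos (mul_pos hKpos hdR) 2)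
  have hδd : (0:ℝ) < δ ^ d := pow_pos hδ d
  have hc0 : (0:ℝ) < (2 * Real.pi) ^ (-(d : ℝ) / 2) :=
    Real.rpow_pos_of_pos (by positivity) _
  have hK1 : (0:ℝ) < max K 1 := lt_of_lt_of_le zero_lt_one (le_max_right _ _)
  have hfac : (0:ℝ) < (d.factorial : ℝ) := by exact_mod_cast d.factorial_pos
  have hsq : (0:ℝ) < Real.sqrt (δ ^ d) := Real.sqrt_pos.mpr hδd
  have hA : (0:ℝ) ≤ (d.factorial * d * (max K 1) ^ d) / (2 * Real.sqrt (δ ^ d) * δ ^ d) := by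
    positivity
  have hB : (0:ℝ) ≤ (Real.sqrt (δ ^ d))⁻¹ * ((d : ℝ) ^ 3 / (2 * δ ^ 2))
      * (4 / mConst d δ K) := by positivity
  rw [gamma0]
  positivity

section kernel

variable {d : ℕ} {S T : Matrix (Fin d) (Fin d) ℝ} {δ K ε : ℝ}

lemma measurable_quadform (M : Matrix (Fin d) (Fin d) ℝ) :
    Measurable (fun x : Fin d → ℝ => x ⬝ᵥ M *ᵥ x) := by
  have : (fun x : Fin d → ℝ => x ⬝ᵥ M *ᵥ x)
      = fun x => ∑ i, x i * ∑ j, M i j * x j := rfl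
  rw [this]
  exact Finset.measurable_sum _ fun i _ =>
    (measurable_pi_apply i).mul
      (Finset.measurable_sum _ fun j _ => (measurable_pi_apply j).const_mul _)

lemma measurable_gaussianPDF (S : Matrix (Fin d) (Fin d) ℝ) : Measurable (gaussianPDF d S) := by
  unfold gaussianPDF
  exact (((measurable_quadform S⁻¹).const_mul _).exp).const_mul _

/-- nonnegativity and upper bound of the pdf. -/
lemma pdf_nonneg (S : Matrix (Fin d) (Fin d) ℝ) (hdet : 0 < S.det) (x : Fin d → ℝ) :
    0 ≤ gaussianPDF d S x := by
  unfold gaussianPDF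
  have h1 : (0:ℝ) < (2 * Real.pi) ^ (-(d : ℝ) / 2) :=
    Real.rpow_pos_of_pos (by positivity) _
  have h2 : (0:ℝ) < S.det ^ (-(1:ℝ)/2) := Real.rpow_pos_of_pos hdet _
  positivity

lemma pdf_le (hd : 0 < d) (hδ : 0 < δ) (hKpos : 0 < K)
    (hSsym : S.IsHermitian) (hSK : ∀ i j, |S i j| ≤ K)
    (hSform : ∀ x : Fin d → ℝ, δ * ∑ i, x i ^ 2 ≤ x ⬝ᵥ S *ᵥ x) (x : Fin d → ℝ) :
    gaussianPDF d S x ≤ (2 * Real.pi) ^ (-(d : ℝ) / 2) * (Real.sqrt (δ ^ d))⁻¹ *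
      Real.exp (-(mConst d δ K / 2) * ∑ i, x i ^ 2) := by
  have hδd : (0:ℝ) < δ ^ d := pow_pos hδ d
  have hdetS : δ ^ d ≤ S.det := det_ge hδ hSsym hSform
  have hdetS0 : 0 < S.det := lt_of_lt_of_le hδd hdetS
  have hdR : (0:ℝ) < d := by exact_mod_cast hd
  have hm0 : 0 < mConst d δ K := div_pos hδ (pow_pos (mul_pos hKpos hdR) 2)
  have hN0 : (0:ℝ) ≤ ∑ i, x i ^ 2 := Finset.sum_nonneg fun k _ => sq_nonneg _
  unfold gaussianPDF
  have h1 : (0:ℝ) < (2 * Real.pi) ^ (-(d : ℝ) / 2) :=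
    Real.rpow_pos_of_pos (by positivity) _
  have h2 : S.det ^ (-(1:ℝ)/2) ≤ (Real.sqrt (δ ^ d))⁻¹ := by
    rw [rpow_neg_half_eq hdetS0]
    exact inv_anti₀ (Real.sqrt_pos.mpr hδd) (Real.sqrt_le_sqrt hdetS)
  have h3 : Real.exp (-(1/2) * (x ⬝ᵥ S⁻¹ *ᵥ x))
      ≤ Real.exp (-(mConst d δ K / 2) * ∑ i, x i ^ 2) := by
    apply Real.exp_le_exp.mpr
    have h4 := inv_form_ge hd hδ hKpos hdetS0.ne' hSK hSform x
    have h5 : mConst d δ K * ∑ i, x i ^ 2 ≤ x ⬝ᵥ S⁻¹ *ᵥ x := by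
      rw [mConst]
      exact h4
    nlinarith
  have h6 : (0:ℝ) < S.det ^ (-(1:ℝ)/2) := Real.rpow_pos_of_pos hdetS0 _
  calc (2 * Real.pi) ^ (-(d : ℝ) / 2) * S.det ^ (-(1:ℝ)/2)
        * Real.exp (-(1/2) * (x ⬝ᵥ S⁻¹ *ᵥ x))
      ≤ (2 * Real.pi) ^ (-(d : ℝ) / 2) * (Real.sqrt (δ ^ d))⁻¹
        * Real.exp (-(mConst d δ K / 2) * ∑ i, x i ^ 2) := by
        refine mul_le_mul (mul_le_mul_of_nonneg_left h2 h1.le) h3 (Real.exp_nonneg _) ?_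
        positivity

lemma integrable_a_pdf (hd : 0 < d) (hδ : 0 < δ) (hKpos : 0 < K)
    (a : (Fin d → ℝ) × (Fin d → ℝ) → ℝ) (ha : Measurable a)
    (hab : ∀ p, a p ∈ Set.Icc (0:ℝ) 1)
    (hSsym : S.IsHermitian) (hSK : ∀ i j, |S i j| ≤ K)
    (hSform : ∀ x : Fin d → ℝ, δ * ∑ i, x i ^ 2 ≤ x ⬝ᵥ S *ᵥ x) (u : Fin d → ℝ) :
    Integrable (fun v : Fin d → ℝ => a (u, v) * gaussianPDF d S (v - u)) := by
  have hdR : (0:ℝ) < d := by exact_mod_cast hd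
  have hm0 : 0 < mConst d δ K := div_pos hδ (pow_pos (mul_pos hKpos hdR) 2)
  have hδd : (0:ℝ) < δ ^ d := pow_pos hδ d
  have hdetS0 : 0 < S.det := lt_of_lt_of_le hδd (det_ge hδ hSsym hSform)
  have hmeas : AEStronglyMeasurable (fun v : Fin d → ℝ => a (u, v) * gaussianPDF d S (v - u))
      volume := by
    refine Measurable.aestronglyMeasurable ?_
    exact (ha.comp (measurable_const.prodMk measurable_id)).mul
      ((measurable_gaussianPDF S).comp (measurable_id.sub measurable_const))
  have hbound : Integrable (fun v : Fin d → ℝ =>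
      (2 * Real.pi) ^ (-(d : ℝ) / 2) * (Real.sqrt (δ ^ d))⁻¹ *
        Real.exp (-(mConst d δ K / 2) * ∑ i, (v - u) i ^ 2)) := by
    have h7 : Integrable (fun w : Fin d → ℝ =>
        Real.exp (-(mConst d δ K / 2) * ∑ i, w i ^ 2)) := by
      have := integrable_gauss (d := d) (c := mConst d δ K / 2) (by positivity)
      exact this
    exact (h7.comp_sub_right u).const_mul _
  refine Integrable.mono' hbound hmeas ?_
  refine Filter.Eventually.of_forall fun v => ?_
  rw [Real.norm_eq_abs, abs_mul]
  have h8 := hab (u, v)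
  have h9 : |a (u, v)| ≤ 1 := abs_le.mpr ⟨by linarith [h8.1], h8.2⟩
  have h10 : |gaussianPDF d S (v - u)| = gaussianPDF d S (v - u) :=
    abs_of_nonneg (pdf_nonneg S hdetS0 _)
  rw [h10]
  calc |a (u, v)| * gaussianPDF d S (v - u) ≤ 1 * gaussianPDF d S (v - u) :=
        mul_le_mul_of_nonneg_right h9 (pdf_nonneg S hdetS0 _)
    _ = gaussianPDF d S (v - u) := one_mul _
    _ ≤ _ := pdf_le hd hδ hKpos hSsym hSK hSform (v - u)

lemma mhProb_diff_le (hd : 0 < d) (hδ : 0 < δ) (hKpos : 0 < K) (hε : 0 ≤ ε)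
    (a : (Fin d → ℝ) × (Fin d → ℝ) → ℝ) (ha : Measurable a)
    (hab : ∀ p, a p ∈ Set.Icc (0:ℝ) 1)
    (hSsym : S.IsHermitian) (hTsym : T.IsHermitian)
    (hSK : ∀ i j, |S i j| ≤ K) (hTK : ∀ i j, |T i j| ≤ K)
    (hSform : ∀ x : Fin d → ℝ, δ * ∑ i, x i ^ 2 ≤ x ⬝ᵥ S *ᵥ x)
    (hTform : ∀ x : Fin d → ℝ, δ * ∑ i, x i ^ 2 ≤ x ⬝ᵥ T *ᵥ x)
    (hdiff : ∀ i j, |S i j - T i j| ≤ ε)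
    (u : Fin d → ℝ) (A : Set (Fin d → ℝ)) (hA : MeasurableSet A) :
    |mhProb d a S u A - mhProb d a T u A| ≤ gamma1 d δ K * ε := by
  have hdR : (0:ℝ) < d := by exact_mod_cast hd
  have hm0 : 0 < mConst d δ K := div_pos hδ (pow_pos (mul_pos hKpos hdR) 2)
  set fS := fun v : Fin d → ℝ => a (u, v) * gaussianPDF d S (v - u) with hfS
  set fT := fun v : Fin d → ℝ => a (u, v) * gaussianPDF d T (v - u) with hfT
  have hIS : Integrable fS := integrable_a_pdf hd hδ hKpos a ha hab hSsym hSK hSform u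
  have hIT : Integrable fT := integrable_a_pdf hd hδ hKpos a ha hab hTsym hTK hTform u
  have hptwise : ∀ v : Fin d → ℝ, |fS v - fT v|
      ≤ gamma0 d δ K * ε * Real.exp (-(mConst d δ K / 4) * ∑ i, (v - u) i ^ 2) := by
    intro v
    have h8 := hab (u, v)
    have h9 : |a (u, v)| ≤ 1 := abs_le.mpr ⟨by linarith [h8.1], h8.2⟩
    have h1 : fS v - fT v = a (u, v) * (gaussianPDF d S (v - u) - gaussianPDF d T (v - u)) := by
      rw [hfS, hfT]; ring
    rw [h1, abs_mul]
    calc |a (u, v)| * |gaussianPDF d S (v - u) - gaussianPDF d T (v - u)|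
        ≤ 1 * |gaussianPDF d S (v - u) - gaussianPDF d T (v - u)| :=
          mul_le_mul_of_nonneg_right h9 (abs_nonneg _)
      _ = |gaussianPDF d S (v - u) - gaussianPDF d T (v - u)| := one_mul _
      _ ≤ _ := pdf_diff_le hd hδ hKpos hε hSsym hTsym hSK hTK hSform hTform hdiff (v - u)
  -- integral of the bound
  have hboundInt : Integrable (fun v : Fin d → ℝ =>
      gamma0 d δ K * ε * Real.exp (-(mConst d δ K / 4) * ∑ i, (v - u) i ^ 2)) := by
    have h7 : Integrable (fun w : Fin d → ℝ =>
        Real.exp (-(mConst d δ K / 4) * ∑ i, w i ^ 2)) :=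
      integrable_gauss (by positivity)
    exact (h7.comp_sub_right u).const_mul _
  have hboundVal : ∫ v : Fin d → ℝ,
      gamma0 d δ K * ε * Real.exp (-(mConst d δ K / 4) * ∑ i, (v - u) i ^ 2)
      = gamma0 d δ K * ε * (Real.sqrt (Real.pi / (mConst d δ K / 4))) ^ d := by
    rw [integral_const_mul]
    congr 1
    have := integral_sub_right_eq_self (μ := volume)
      (fun w : Fin d → ℝ => Real.exp (-(mConst d δ K / 4) * ∑ i, w i ^ 2)) u
    rw [this]
    exact integral_gauss (by positivity)
  have hIabs : Integrable (fun v => |fS v - fT v|) := (hIS.sub hIT).abs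
  have hintdiff : ∫ v, |fS v - fT v|
      ≤ gamma0 d δ K * ε * (Real.sqrt (Real.pi / (mConst d δ K / 4))) ^ d := by
    rw [← hboundVal]
    refine integral_mono hIabs hboundInt fun v => hptwise v
  -- set integral difference
  have hsetdiff : |(∫ v in A, fS v) - ∫ v in A, fT v|
      ≤ gamma0 d δ K * ε * (Real.sqrt (Real.pi / (mConst d δ K / 4))) ^ d := by
    rw [← integral_sub hIS.integrableOn hIT.integrableOn]
    refine le_trans (by simpa [Real.norm_eq_abs] using norm_integral_le_integral_norm (μ := volume.restrict A) (fun v => fS v - fT v)) (le_trans ?_ hintdiff)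
    exact setIntegral_le_integral hIabs
      (Filter.Eventually.of_forall fun v => abs_nonneg _)
  have htotdiff : |(∫ v, fS v) - ∫ v, fT v|
      ≤ gamma0 d δ K * ε * (Real.sqrt (Real.pi / (mConst d δ K / 4))) ^ d := by
    rw [← integral_sub hIS hIT]
    exact le_trans (by simpa [Real.norm_eq_abs] using norm_integral_le_integral_norm (μ := (volume : Measure (Fin d → ℝ))) (fun v => fS v - fT v)) hintdiff
  -- assemble
  rw [mhProb, mhProb]
  by_cases hu : u ∈ A
  · rw [Set.indicator_of_mem hu, Set.indicator_of_mem hu]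
    rw [gamma1]
    have : (∫ v in A, fS v) + (1 - ∫ v, fS v) - ((∫ v in A, fT v) + (1 - ∫ v, fT v))
        = ((∫ v in A, fS v) - ∫ v in A, fT v) - ((∫ v, fS v) - ∫ v, fT v) := by ring
    rw [this]
    have habs := abs_sub (((∫ v in A, fS v) - ∫ v in A, fT v)) (((∫ v, fS v) - ∫ v, fT v))
    calc |((∫ v in A, fS v) - ∫ v in A, fT v) - ((∫ v, fS v) - ∫ v, fT v)|
        ≤ |(∫ v in A, fS v) - ∫ v in A, fT v| + |(∫ v, fS v) - ∫ v, fT v| :=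
          abs_sub _ _
      _ ≤ gamma0 d δ K * ε * (Real.sqrt (Real.pi / (mConst d δ K / 4))) ^ d
          + gamma0 d δ K * ε * (Real.sqrt (Real.pi / (mConst d δ K / 4))) ^ d :=
          add_le_add hsetdiff htotdiff
      _ = 2 * gamma0 d δ K * (Real.sqrt (Real.pi / (mConst d δ K / 4))) ^ d * ε := by ring
  · rw [Set.indicator_of_notMem hu, Set.indicator_of_notMem hu]
    rw [gamma1]
    simp only [add_zero]
    calc |(∫ v in A, fS v) - ∫ v in A, fT v|
        ≤ gamma0 d δ K * ε * (Real.sqrt (Real.pi / (mConst d δ K / 4))) ^ d := hsetdiff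
      _ ≤ 2 * gamma0 d δ K * (Real.sqrt (Real.pi / (mConst d δ K / 4))) ^ d * ε := by
          have hCn : (0:ℝ) ≤ (Real.sqrt (Real.pi / (mConst d δ K / 4))) ^ d :=
            pow_nonneg (Real.sqrt_nonneg _) d
          have hg0n := gamma0_nonneg hd hδ hKpos
          nlinarith [mul_nonneg (mul_nonneg hg0n hε) hCn]
  
end kernel

section emp

variable {d n : ℕ} {δ R : ℝ} {x : ℕ → Fin d → ℝ}

lemma empCov_apply (i j : Fin d) :
    empCov d n δ x i j
      = ((n : ℝ) - 1)⁻¹ * ∑ k ∈ Finset.range n,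
          (x k i - empMean d n x i) * (x k j - empMean d n x j)
        + δ * (if i = j then 1 else 0) := by
  simp [empCov, Matrix.add_apply, Matrix.smul_apply, Matrix.sum_apply,
    Matrix.vecMulVec_apply, Matrix.one_apply, Finset.mul_sum, Pi.sub_apply,
    smul_eq_mul, mul_ite, mul_one, mul_zero]

lemma empCov_isHermitian : (empCov d n δ x).IsHermitian := by
  rw [Matrix.IsHermitian]
  ext i j
  rw [Matrix.conjTranspose_apply]
  have h1 := empCov_apply (δ := δ) (x := x) (n := n) i j
  have h2 := empCov_apply (δ := δ) (x := x) (n := n) j i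
  rw [star_trivial, h1, h2]
  have : ∀ k, (x k j - empMean d n x j) * (x k i - empMean d n x i)
      = (x k i - empMean d n x i) * (x k j - empMean d n x j) := fun k => mul_comm _ _
  simp only [this]
  by_cases h : i = j
  · subst h; ring
  · have h' : ¬ j = i := fun hh => h hh.symm
    rw [if_neg h, if_neg h']

lemma vecMulVec_form (v y : Fin d → ℝ) :
    y ⬝ᵥ (Matrix.vecMulVec v v) *ᵥ y = (v ⬝ᵥ y) ^ 2 := by
  have h1 : (Matrix.vecMulVec v v) *ᵥ y = (v ⬝ᵥ y) • v := by
    ext i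
    simp only [Matrix.mulVec, dotProduct, Matrix.vecMulVec_apply, Pi.smul_apply,
      smul_eq_mul]
    rw [Finset.sum_mul]
    exact Finset.sum_congr rfl fun j _ => by ring
  rw [h1, dotProduct_smul, smul_eq_mul, dotProduct_comm y v, pow_two]

lemma dot_sum_mulVec {ι : Type*} (s : Finset ι) (M : ι → Matrix (Fin d) (Fin d) ℝ)
    (y : Fin d → ℝ) :
    y ⬝ᵥ (∑ k ∈ s, M k) *ᵥ y = ∑ k ∈ s, y ⬝ᵥ (M k) *ᵥ y := by
  classical
  induction s using Finset.induction_on with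
  | empty => simp [Matrix.zero_mulVec]
  | @insert a s ha ih =>
    rw [Finset.sum_insert ha, Finset.sum_insert ha, Matrix.add_mulVec,
      dotProduct_add, ih]

lemma empCov_form (hδ : 0 < δ) (hn : 2 ≤ n) (y : Fin d → ℝ) :
    δ * ∑ i, y i ^ 2 ≤ y ⬝ᵥ (empCov d n δ x) *ᵥ y := by
  unfold empCov
  rw [Matrix.add_mulVec, dotProduct_add, Matrix.smul_mulVec,
    dotProduct_smul, Matrix.smul_mulVec, dotProduct_smul,
    Matrix.one_mulVec]
  have h1 : y ⬝ᵥ y = ∑ i, y i ^ 2 := by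
    simp [dotProduct, pow_two]
  have h2 : (0:ℝ) ≤ ((n : ℝ) - 1)⁻¹ := by
    have : (1:ℝ) ≤ (n:ℝ) - 1 := by
      have : (2:ℝ) ≤ (n:ℝ) := by exact_mod_cast hn
      linarith
    positivity
  have h3 : (0:ℝ) ≤ y ⬝ᵥ (∑ k ∈ Finset.range n,
      Matrix.vecMulVec (x k - empMean d n x) (x k - empMean d n x)) *ᵥ y := by
    rw [dot_sum_mulVec]
    refine Finset.sum_nonneg fun k _ => ?_
    rw [vecMulVec_form]
    exact sq_nonneg _
  have h4 : δ • (y ⬝ᵥ y) = δ * ∑ i, y i ^ 2 := by rw [smul_eq_mul, h1]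
  rw [h4]
  have h5 : ((n : ℝ) - 1)⁻¹ • (y ⬝ᵥ (∑ k ∈ Finset.range n,
      Matrix.vecMulVec (x k - empMean d n x) (x k - empMean d n x)) *ᵥ y) ≥ 0 := by
    rw [smul_eq_mul]
    exact mul_nonneg h2 h3
  linarith

end emp

section emp2

variable {d n : ℕ} {δ R : ℝ} {x : ℕ → Fin d → ℝ}

lemma coord_le_eucNorm (y : Fin d → ℝ) (j : Fin d) : |y j| ≤ eucNorm y := by
  rw [eucNorm, ← Real.sqrt_sq_eq_abs]
  exact Real.sqrt_le_sqrt (Finset.single_le_sum (fun k _ => sq_nonneg (y k))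
    (Finset.mem_univ j))

lemma mean_coord_le {m : ℕ} (hm : 1 ≤ m) (hR : 0 ≤ R)
    (hcoord : ∀ k ∈ Finset.range m, ∀ j, |x k j| ≤ R) (j : Fin d) :
    |empMean d m x j| ≤ R := by
  have hmm : (0:ℝ) < (m:ℝ) := by exact_mod_cast hm
  have h1 : empMean d m x j = (m:ℝ)⁻¹ * ∑ k ∈ Finset.range m, x k j := by
    simp [empMean, Finset.sum_apply]
  rw [h1, abs_mul, abs_of_pos (inv_pos.mpr hmm)]
  have h2 : |∑ k ∈ Finset.range m, x k j| ≤ (m:ℝ) * R := by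
    refine le_trans (Finset.abs_sum_le_sum_abs _ _) ?_
    calc ∑ k ∈ Finset.range m, |x k j| ≤ ∑ _k ∈ Finset.range m, R :=
          Finset.sum_le_sum fun k hk => hcoord k hk j
      _ = (m:ℝ) * R := by rw [Finset.sum_const, Finset.card_range, nsmul_eq_mul]
  calc (m:ℝ)⁻¹ * |∑ k ∈ Finset.range m, x k j| ≤ (m:ℝ)⁻¹ * ((m:ℝ) * R) :=
        mul_le_mul_of_nonneg_left h2 (inv_nonneg.mpr hmm.le)
    _ = R := by field_simp

lemma mean_diff_le (hn : 2 ≤ n) (hR : 0 ≤ R)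
    (hcoord : ∀ k ∈ Finset.range (n+1), ∀ j, |x k j| ≤ R) (j : Fin d) :
    |empMean d (n+1) x j - empMean d n x j| ≤ 2 * R / n := by
  have hnn : (2:ℝ) ≤ (n:ℝ) := by exact_mod_cast hn
  have hn0 : (0:ℝ) < (n:ℝ) := by linarith
  have hn1 : (0:ℝ) < (n:ℝ) + 1 := by linarith
  set S : ℝ := ∑ k ∈ Finset.range n, x k j with hS
  have h1 : empMean d n x j = (n:ℝ)⁻¹ * S := by
    simp [empMean, Finset.sum_apply, hS]
  have h2 : empMean d (n+1) x j = ((n:ℝ)+1)⁻¹ * (S + x n j) := by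
    simp only [empMean, Pi.smul_apply, Finset.sum_apply, smul_eq_mul]
    rw [Finset.sum_range_succ]
    push_cast
    rw [hS]
  have hSb : |S| ≤ (n:ℝ) * R := by
    refine le_trans (Finset.abs_sum_le_sum_abs _ _) ?_
    calc ∑ k ∈ Finset.range n, |x k j| ≤ ∑ _k ∈ Finset.range n, R :=
          Finset.sum_le_sum fun k hk => hcoord k (Finset.mem_range.mpr
            (lt_trans (Finset.mem_range.mp hk) (Nat.lt_succ_self n))) j
      _ = (n:ℝ) * R := by rw [Finset.sum_const, Finset.card_range, nsmul_eq_mul]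
  have hxb : |x n j| ≤ R := hcoord n (Finset.mem_range.mpr (Nat.lt_succ_self n)) j
  have h3 : empMean d (n+1) x j - empMean d n x j
      = (((n:ℝ)+1)⁻¹ - (n:ℝ)⁻¹) * S + ((n:ℝ)+1)⁻¹ * x n j := by
    rw [h1, h2]
    ring
  have h4 : |((n:ℝ)+1)⁻¹ - (n:ℝ)⁻¹| = ((n:ℝ) * ((n:ℝ)+1))⁻¹ := by
    have : ((n:ℝ)+1)⁻¹ - (n:ℝ)⁻¹ = -(((n:ℝ) * ((n:ℝ)+1))⁻¹) := by
      field_simp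
      ring
    rw [this, abs_neg, abs_of_pos (by positivity)]
  rw [h3]
  calc |(((n:ℝ)+1)⁻¹ - (n:ℝ)⁻¹) * S + ((n:ℝ)+1)⁻¹ * x n j|
      ≤ |(((n:ℝ)+1)⁻¹ - (n:ℝ)⁻¹)| * |S| + ((n:ℝ)+1)⁻¹ * |x n j| := by
        refine le_trans (abs_add_le _ _) ?_
        rw [abs_mul, abs_mul, abs_of_pos (inv_pos.mpr hn1)]
    _ ≤ ((n:ℝ) * ((n:ℝ)+1))⁻¹ * ((n:ℝ) * R) + ((n:ℝ)+1)⁻¹ * R := by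
        rw [h4]
        exact add_le_add (mul_le_mul_of_nonneg_left hSb (by positivity))
          (mul_le_mul_of_nonneg_left hxb (by positivity))
    _ = 2 * R / ((n:ℝ)+1) := by
        field_simp
        ring
    _ ≤ 2 * R / n := by
        apply div_le_div_of_nonneg_left (by linarith) hn0
        linarith

lemma empCov_entries_le {m : ℕ} (hδ : 0 < δ) (hm : 2 ≤ m) (hR : 0 ≤ R)
    (hcoord : ∀ k ∈ Finset.range m, ∀ j, |x k j| ≤ R) (i j : Fin d) :
    |empCov d m δ x i j| ≤ δ + 8 * R ^ 2 := by
  have hmm : (2:ℝ) ≤ (m:ℝ) := by exact_mod_cast hm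
  have hm0 : (0:ℝ) < (m:ℝ) := by linarith
  have hm1 : (0:ℝ) < (m:ℝ) - 1 := by linarith
  have hμ : ∀ l : Fin d, |empMean d m x l| ≤ R :=
    mean_coord_le (le_trans (by norm_num) hm) hR hcoord
  have hv : ∀ k ∈ Finset.range m, ∀ l, |x k l - empMean d m x l| ≤ 2 * R := by
    intro k hk l
    calc |x k l - empMean d m x l| ≤ |x k l| + |empMean d m x l| := abs_sub _ _
      _ ≤ R + R := add_le_add (hcoord k hk l) (hμ l)
      _ = 2 * R := by ring
  rw [empCov_apply]
  have hsum : |∑ k ∈ Finset.range m,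
      (x k i - empMean d m x i) * (x k j - empMean d m x j)| ≤ (m:ℝ) * (4 * R^2) := by
    refine le_trans (Finset.abs_sum_le_sum_abs _ _) ?_
    calc ∑ k ∈ Finset.range m, |(x k i - empMean d m x i) * (x k j - empMean d m x j)|
        ≤ ∑ _k ∈ Finset.range m, 4 * R^2 := by
          refine Finset.sum_le_sum fun k hk => ?_
          rw [abs_mul]
          have h1 := hv k hk i
          have h2 := hv k hk j
          nlinarith [abs_nonneg (x k i - empMean d m x i), abs_nonneg (x k j - empMean d m x j)]
      _ = (m:ℝ) * (4 * R^2) := by rw [Finset.sum_const, Finset.card_range, nsmul_eq_mul]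
  have hfrac : ((m:ℝ) - 1)⁻¹ * (m:ℝ) ≤ 2 := by
    rw [inv_mul_le_iff₀ hm1]
    linarith
  refine le_trans (abs_add_le _ _) ?_
  have hterm1 : |((m:ℝ) - 1)⁻¹ * ∑ k ∈ Finset.range m,
      (x k i - empMean d m x i) * (x k j - empMean d m x j)| ≤ 8 * R^2 := by
    rw [abs_mul, abs_of_pos (inv_pos.mpr hm1)]
    calc ((m:ℝ) - 1)⁻¹ * |∑ k ∈ Finset.range m,
          (x k i - empMean d m x i) * (x k j - empMean d m x j)|
        ≤ ((m:ℝ) - 1)⁻¹ * ((m:ℝ) * (4 * R^2)) :=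
          mul_le_mul_of_nonneg_left hsum (inv_nonneg.mpr hm1.le)
      _ = (((m:ℝ) - 1)⁻¹ * (m:ℝ)) * (4 * R^2) := by ring
      _ ≤ 2 * (4 * R^2) := mul_le_mul_of_nonneg_right hfrac (by positivity)
      _ = 8 * R^2 := by ring
  have hterm2 : |δ * (if i = j then (1:ℝ) else 0)| ≤ δ := by
    by_cases h : i = j <;> simp [h, abs_of_pos hδ, hδ.le]
  linarith

end emp2

section emp3

variable {d n : ℕ} {δ R : ℝ} {x : ℕ → Fin d → ℝ}

lemma empCov_diff_le (hn : 2 ≤ n) (hR : 0 ≤ R)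
    (hcoord : ∀ k ∈ Finset.range (n+1), ∀ j, |x k j| ≤ R) (i j : Fin d) :
    |empCov d n δ x i j - empCov d (n+1) δ x i j| ≤ 24 * R ^ 2 / n := by
  have hnn : (2:ℝ) ≤ (n:ℝ) := by exact_mod_cast hn
  have hn0 : (0:ℝ) < (n:ℝ) := by linarith
  have hn1 : (0:ℝ) < (n:ℝ) - 1 := by linarith
  set μ := empMean d n x with hμdef
  set ν := empMean d (n+1) x with hνdef
  set p : ℕ → ℝ := fun k => (x k i - μ i) * (x k j - μ j) with hp
  set q : ℕ → ℝ := fun k => (x k i - ν i) * (x k j - ν j) with hq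
  have hcoordn : ∀ k ∈ Finset.range n, ∀ l, |x k l| ≤ R := fun k hk l =>
    hcoord k (Finset.mem_range.mpr (lt_trans (Finset.mem_range.mp hk) (Nat.lt_succ_self n))) l
  have hμb : ∀ l, |μ l| ≤ R := mean_coord_le (le_trans (by norm_num) hn) hR hcoordn
  have hνb : ∀ l, |ν l| ≤ R := mean_coord_le (by omega) hR hcoord
  have hvb : ∀ k ∈ Finset.range n, ∀ l, |x k l - μ l| ≤ 2 * R := fun k hk l => by
    calc |x k l - μ l| ≤ |x k l| + |μ l| := abs_sub _ _
      _ ≤ R + R := add_le_add (hcoordn k hk l) (hμb l)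
      _ = 2 * R := by ring
  have hwb : ∀ k ∈ Finset.range (n+1), ∀ l, |x k l - ν l| ≤ 2 * R := fun k hk l => by
    calc |x k l - ν l| ≤ |x k l| + |ν l| := abs_sub _ _
      _ ≤ R + R := add_le_add (hcoord k hk l) (hνb l)
      _ = 2 * R := by ring
  have hmd : ∀ l, |ν l - μ l| ≤ 2 * R / n := fun l => mean_diff_le hn hR hcoord l
  -- pointwise bounds
  have hpb : ∀ k ∈ Finset.range n, |p k| ≤ 4 * R^2 := fun k hk => by
    rw [hp, abs_mul]
    have h1 := hvb k hk i
    have h2 := hvb k hk j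
    nlinarith [abs_nonneg (x k i - μ i), abs_nonneg (x k j - μ j)]
  have hqb : ∀ k ∈ Finset.range (n+1), |q k| ≤ 4 * R^2 := fun k hk => by
    rw [hq, abs_mul]
    have h1 := hwb k hk i
    have h2 := hwb k hk j
    nlinarith [abs_nonneg (x k i - ν i), abs_nonneg (x k j - ν j)]
  have hpq : ∀ k ∈ Finset.range n, |p k - q k| ≤ 8 * R^2 / n := fun k hk => by
    have hid : p k - q k = (ν i - μ i) * (x k j - μ j) + (x k i - ν i) * (ν j - μ j) := by
      rw [hp, hq]
      ring
    rw [hid]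
    have h1 := hmd i
    have h2 := hvb k hk j
    have h3 := hwb k (Finset.mem_range.mpr (lt_trans (Finset.mem_range.mp hk)
      (Nat.lt_succ_self n))) i
    have h4 := hmd j
    calc |(ν i - μ i) * (x k j - μ j) + (x k i - ν i) * (ν j - μ j)|
        ≤ |ν i - μ i| * |x k j - μ j| + |x k i - ν i| * |ν j - μ j| := by
          refine le_trans (abs_add_le _ _) ?_
          rw [abs_mul, abs_mul]
      _ ≤ (2 * R / n) * (2 * R) + (2 * R) * (2 * R / n) := by
          refine add_le_add (mul_le_mul h1 h2 (abs_nonneg _) (by positivity))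
            (mul_le_mul h3 h4 (abs_nonneg _) (by positivity))
      _ = 8 * R^2 / n := by field_simp; ring
  -- sums
  set Sp : ℝ := ∑ k ∈ Finset.range n, p k with hSp
  set Sq : ℝ := ∑ k ∈ Finset.range n, q k with hSq
  have hSpb : |Sp| ≤ (n:ℝ) * (4 * R^2) := by
    refine le_trans (Finset.abs_sum_le_sum_abs _ _) ?_
    calc ∑ k ∈ Finset.range n, |p k| ≤ ∑ _k ∈ Finset.range n, 4 * R^2 :=
          Finset.sum_le_sum hpb
      _ = (n:ℝ) * (4 * R^2) := by rw [Finset.sum_const, Finset.card_range, nsmul_eq_mul]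
  have hSpqb : |Sp - Sq| ≤ 8 * R^2 := by
    rw [hSp, hSq, ← Finset.sum_sub_distrib]
    refine le_trans (Finset.abs_sum_le_sum_abs _ _) ?_
    calc ∑ k ∈ Finset.range n, |p k - q k| ≤ ∑ _k ∈ Finset.range n, 8 * R^2 / n :=
          Finset.sum_le_sum hpq
      _ = (n:ℝ) * (8 * R^2 / n) := by rw [Finset.sum_const, Finset.card_range, nsmul_eq_mul]
      _ = 8 * R^2 := by field_simp
  have hqnb : |q n| ≤ 4 * R^2 := hqb n (Finset.mem_range.mpr (Nat.lt_succ_self n))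
  -- decomposition of the entry difference
  have hdec : empCov d n δ x i j - empCov d (n+1) δ x i j
      = (((n:ℝ) - 1)⁻¹ - (n:ℝ)⁻¹) * Sp + (n:ℝ)⁻¹ * (Sp - Sq) - (n:ℝ)⁻¹ * q n := by
    rw [empCov_apply, empCov_apply]
    have hc1 : ((n:ℕ):ℝ) + 1 - 1 = (n:ℝ) := by ring
    have hsum2 : ∑ k ∈ Finset.range (n+1), (x k i - ν i) * (x k j - ν j) = Sq + q n := by
      rw [Finset.sum_range_succ, hSq]
    have hsum1 : ∑ k ∈ Finset.range n, (x k i - μ i) * (x k j - μ j) = Sp := rfl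
    push_cast
    rw [hsum1]
    rw [show ((n:ℝ) + 1 - 1) = (n:ℝ) from by ring]
    rw [hsum2]
    ring
  have hfrac : |((n:ℝ) - 1)⁻¹ - (n:ℝ)⁻¹| = (((n:ℝ) - 1) * (n:ℝ))⁻¹ := by
    have h : ((n:ℝ) - 1)⁻¹ - (n:ℝ)⁻¹ = (((n:ℝ) - 1) * (n:ℝ))⁻¹ := by
      field_simp
      ring
    rw [h, abs_of_pos (by positivity)]
  rw [hdec]
  have hbound1 : |(((n:ℝ) - 1)⁻¹ - (n:ℝ)⁻¹) * Sp| ≤ 8 * R^2 / n := by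
    rw [abs_mul, hfrac]
    calc (((n:ℝ) - 1) * (n:ℝ))⁻¹ * |Sp| ≤ (((n:ℝ) - 1) * (n:ℝ))⁻¹ * ((n:ℝ) * (4 * R^2)) :=
          mul_le_mul_of_nonneg_left hSpb (by positivity)
      _ = 4 * R^2 / ((n:ℝ) - 1) := by field_simp
      _ ≤ 8 * R^2 / n := by
          rw [div_le_div_iff₀ hn1 hn0]
          nlinarith [sq_nonneg R]
  have hbound2 : |(n:ℝ)⁻¹ * (Sp - Sq)| ≤ 8 * R^2 / n := by
    rw [abs_mul, abs_of_pos (inv_pos.mpr hn0)]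
    calc (n:ℝ)⁻¹ * |Sp - Sq| ≤ (n:ℝ)⁻¹ * (8 * R^2) :=
          mul_le_mul_of_nonneg_left hSpqb (by positivity)
      _ = 8 * R^2 / n := by field_simp
  have hbound3 : |(n:ℝ)⁻¹ * q n| ≤ 4 * R^2 / n := by
    rw [abs_mul, abs_of_pos (inv_pos.mpr hn0)]
    calc (n:ℝ)⁻¹ * |q n| ≤ (n:ℝ)⁻¹ * (4 * R^2) :=
          mul_le_mul_of_nonneg_left hqnb (by positivity)
      _ = 4 * R^2 / n := by field_simp
  calc |(((n:ℝ) - 1)⁻¹ - (n:ℝ)⁻¹) * Sp + (n:ℝ)⁻¹ * (Sp - Sq) - (n:ℝ)⁻¹ * q n|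
      ≤ |(((n:ℝ) - 1)⁻¹ - (n:ℝ)⁻¹) * Sp + (n:ℝ)⁻¹ * (Sp - Sq)| + |(n:ℝ)⁻¹ * q n| :=
        abs_sub _ _
    _ ≤ |(((n:ℝ) - 1)⁻¹ - (n:ℝ)⁻¹) * Sp| + |(n:ℝ)⁻¹ * (Sp - Sq)| + |(n:ℝ)⁻¹ * q n| := by
        have := abs_add_le ((((n:ℝ) - 1)⁻¹ - (n:ℝ)⁻¹) * Sp) ((n:ℝ)⁻¹ * (Sp - Sq))
        linarith
    _ ≤ 8 * R^2 / n + 8 * R^2 / n + 4 * R^2 / n := by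
        exact add_le_add (add_le_add hbound1 hbound2) hbound3
    _ ≤ 24 * R^2 / n := by
        rw [← add_div, ← add_div]
        apply div_le_div_of_nonneg_right ?_ hn0.le
        nlinarith [sq_nonneg R]
    _ = 24 * R^2 / n := rfl

end emp3


lemma gamma1_pos {d : ℕ} {δ K : ℝ} (hd : 0 < d) (hδ : 0 < δ) (hKpos : 0 < K) :
    0 < gamma1 d δ K := by
  have hdR : (0:ℝ) < d := by exact_mod_cast hd
  have hm0 : 0 < mConst d δ K := div_pos hδ (pow_pos (mul_pos hKpos hdR) 2)
  have hδd : (0:ℝ) < δ ^ d := pow_pos hδ d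
  have hc0 : (0:ℝ) < (2 * Real.pi) ^ (-(d : ℝ) / 2) :=
    Real.rpow_pos_of_pos (by positivity) _
  have hK1 : (0:ℝ) < max K 1 := lt_of_lt_of_le zero_lt_one (le_max_right _ _)
  have hfac : (0:ℝ) < (d.factorial : ℝ) := by exact_mod_cast d.factorial_pos
  have hsq : (0:ℝ) < Real.sqrt (δ ^ d) := Real.sqrt_pos.mpr hδd
  have hA : (0:ℝ) < (d.factorial * d * (max K 1) ^ d) / (2 * Real.sqrt (δ ^ d) * δ ^ d) := by
    positivity
  have hB : (0:ℝ) ≤ (Real.sqrt (δ ^ d))⁻¹ * ((d : ℝ) ^ 3 / (2 * δ ^ 2))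
      * (4 / mConst d δ K) := by positivity
  have hg0 : 0 < gamma0 d δ K := by
    rw [gamma0]
    exact mul_pos hc0 (by linarith)
  have hC : (0:ℝ) < Real.sqrt (Real.pi / (mConst d δ K / 4)) := by
    apply Real.sqrt_pos.mpr
    have := Real.pi_pos
    positivity
  rw [gamma1]
  positivity

/-- Finite-dimensional diminishing adaptation: for the adaptive Metropolis kernels
`Q_n` built from regularized empirical covariances of points of norm at most `R`,
there is `γ > 0`, depending only on `d`, `R`, `δ`, with
`|Q_n(u, A) − Q_{n+1}(u, A)| ≤ γ/n` for all `n ≥ 2`, all states `u` and all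
measurable sets `A`. -/
theorem diminishing_adaptation
    (d : ℕ) (hd : 0 < d) (R δ : ℝ) (hR : 0 < R) (hδ : 0 < δ) :
    ∃ γ > 0, ∀ a : (Fin d → ℝ) × (Fin d → ℝ) → ℝ,
      Measurable a → (∀ p, a p ∈ Set.Icc (0 : ℝ) 1) →
      ∀ n : ℕ, 2 ≤ n →
      ∀ x : ℕ → Fin d → ℝ, (∀ i ∈ Finset.range (n + 1), eucNorm (x i) ≤ R) →
      ∀ u : Fin d → ℝ, ∀ A : Set (Fin d → ℝ), MeasurableSet A →
        |mhProb d a (empCov d n δ x) u A - mhProb d a (empCov d (n + 1) δ x) u A| ≤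
          γ / n := by
  set K : ℝ := δ + 8 * R ^ 2 with hKdef
  have hKpos : 0 < K := by rw [hKdef]; positivity
  refine ⟨gamma1 d δ K * (24 * R ^ 2), ?_, ?_⟩
  · have := gamma1_pos hd hδ hKpos
    positivity
  intro a ha hab n hn x hx u A hA
  have hnn : (2:ℝ) ≤ (n:ℝ) := by exact_mod_cast hn
  have hn0 : (0:ℝ) < (n:ℝ) := by linarith
  have hR0 : (0:ℝ) ≤ R := hR.le
  have hcoord : ∀ k ∈ Finset.range (n+1), ∀ j, |x k j| ≤ R := fun k hk j =>
    le_trans (coord_le_eucNorm (x k) j) (hx k hk)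
  have hcoordn : ∀ k ∈ Finset.range n, ∀ j, |x k j| ≤ R := fun k hk j =>
    hcoord k (Finset.mem_range.mpr (lt_trans (Finset.mem_range.mp hk) (Nat.lt_succ_self n))) j
  have hε : (0:ℝ) ≤ 24 * R ^ 2 / n := by positivity
  have hkey := mhProb_diff_le (S := empCov d n δ x) (T := empCov d (n+1) δ x)
    (ε := 24 * R ^ 2 / n) hd hδ hKpos hε a ha hab
    empCov_isHermitian empCov_isHermitian
    (empCov_entries_le hδ hn hR0 hcoordn)
    (empCov_entries_le hδ (by omega) hR0 hcoord)
    (empCov_form hδ hn)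
    (empCov_form hδ (by omega))
    (empCov_diff_le hn hR0 hcoord)
    u A hA
  calc |mhProb d a (empCov d n δ x) u A - mhProb d a (empCov d (n + 1) δ x) u A|
      ≤ gamma1 d δ K * (24 * R ^ 2 / n) := hkey
    _ = gamma1 d δ K * (24 * R ^ 2) / n := by ring
end
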